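/- arXiv:1005.1507 — 6 statements merged into one kernel-verified Lean document; each statement's English description precedes it below -/
import Mathlib

section
/- For every λ ∈ (0,1) there exists a constant C = C(λ) > 0 such that for every c_λ > 0 and every φ ∈ L¹(ℝ) ∩ BV(ℝ), the integral defining L[φ](x) converges absolutely for a.e. x ∈ ℝ, L[φ] ∈ L¹(ℝ), and ∫_ℝ |L[φ](x)| dx ≤ c_λ C ‖φ‖_{L¹(ℝ)}^{1−λ} |φ|_{BV(ℝ)}^{λ}. -/
open MeasureTheory Filter Set

open scoped ENNReal

lemma lint_shift (f : ℝ → ℝ≥0∞) (c : ℝ) :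
    ∫⁻ x : ℝ, f (x + c) = ∫⁻ x : ℝ, f x := by
  have m : MeasurableEmbedding fun x : ℝ => x + c :=
    (Homeomorph.addRight c).measurableEmbedding
  conv_rhs => rw [← map_add_right_eq_self (volume : Measure ℝ) c]
  rw [m.lintegral_map]

lemma lint_shift_Ico (f : ℝ → ℝ≥0∞) (a b c : ℝ) :
    ∫⁻ x in Set.Ico a b, f x = ∫⁻ x in Set.Ico (a - c) (b - c), f (x + c) := by
  have m : MeasurableEmbedding fun x : ℝ => x + c :=
    (Homeomorph.addRight c).measurableEmbedding
  conv_lhs => rw [← map_add_right_eq_self (volume : Measure ℝ) c]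
  rw [Measure.restrict_map (measurable_add_const c) measurableSet_Ico, m.lintegral_map]
  congr 1
  simp [Set.preimage_add_const_Ico]

lemma lint_neg_Iio (f : ℝ → ℝ≥0∞) :
    ∫⁻ x in Set.Iio (0:ℝ), f x = ∫⁻ x in Set.Ioi (0:ℝ), f (-x) := by
  have m : MeasurableEmbedding fun x : ℝ => -x :=
    (Homeomorph.neg ℝ).measurableEmbedding
  conv_lhs => rw [← Measure.map_neg_eq_self (volume : Measure ℝ)]
  rw [show (Neg.neg : ℝ → ℝ) = fun x : ℝ => -x from rfl]
  rw [Measure.restrict_map measurable_neg measurableSet_Iio, m.lintegral_map]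
  congr 1
  ext x; simp

lemma finset_sum_lintegral_le {ι : Type*} (s : Finset ι) (g : ι → ℝ → ℝ≥0∞) (μ : Measure ℝ) :
    ∑ n ∈ s, ∫⁻ x, g n x ∂μ ≤ ∫⁻ x, ∑ n ∈ s, g n x ∂μ := by
  classical
  induction s using Finset.induction with
  | empty => simp
  | insert a s' h ih =>
      rw [Finset.sum_insert h]
      refine le_trans (add_le_add_right ih _) ?_
      refine le_trans (MeasureTheory.le_lintegral_add _ _) ?_
      refine lintegral_mono fun x => ?_
      rw [Finset.sum_insert h]

lemma sum_edist_le_variation (φ : ℝ → ℝ) {h : ℝ} (hh : 0 ≤ h) (x : ℝ) (F : Finset ℤ) :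
    ∑ n ∈ F, edist (φ (x + n * h + h)) (φ (x + n * h)) ≤ eVariationOn φ Set.univ := by
  classical
  set N : ℕ := F.sup fun n => n.natAbs with hN
  have hFsub : F ⊆ Finset.Icc (-(N:ℤ)) (N:ℤ) := by
    intro n hn
    have : n.natAbs ≤ N := Finset.le_sup hn
    simp only [Finset.mem_Icc]
    omega
  refine le_trans (Finset.sum_le_sum_of_subset hFsub) ?_
  set u : ℕ → ℝ := fun i => x + ((i : ℤ) - (N:ℤ)) * h with hu
  have hmono : Monotone u := by
    intro i j hij
    simp only [hu]
    have h2 : (((i:ℤ)):ℝ) ≤ ((j:ℤ):ℝ) := by exact_mod_cast hij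
    nlinarith [mul_le_mul_of_nonneg_right (sub_le_sub_right h2 (((N:ℤ)):ℝ)) hh]
  refine le_trans (le_of_eq ?_) (eVariationOn.sum_le (f := φ) (n := 2*N+1) hmono (fun i => Set.mem_univ _))
  refine Finset.sum_nbij' (fun n => (n + (N:ℤ)).toNat) (fun i => (i:ℤ) - (N:ℤ)) ?_ ?_ ?_ ?_ ?_
  · intro n hn
    simp only [Finset.mem_Icc] at hn
    simp only [Finset.mem_range]
    omega
  · intro i hi
    simp only [Finset.mem_range] at hi
    simp only [Finset.mem_Icc]
    omega
  · intro n hn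
    simp only [Finset.mem_Icc] at hn
    show ((n + (N:ℤ)).toNat : ℤ) - (N:ℤ) = n
    omega
  · intro i hi
    simp only [Finset.mem_range] at hi
    show (((i:ℤ) - (N:ℤ)) + (N:ℤ)).toNat = i
    omega
  · intro n hn
    simp only [Finset.mem_Icc] at hn
    have e1 : u ((n + (N:ℤ)).toNat + 1) = x + n * h + h := by
      simp only [hu]
      have : (((n + (N:ℤ)).toNat + 1 : ℕ) : ℤ) = n + N + 1 := by omega
      rw [this]
      push_cast
      ring
    have e2 : u ((n + (N:ℤ)).toNat) = x + n * h := by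
      simp only [hu]
      have : (((n + (N:ℤ)).toNat : ℕ) : ℤ) = n + N := by omega
      rw [this]
      push_cast
      ring
    rw [e1, e2]
lemma lint_edist_add_le (φ : ℝ → ℝ) {h : ℝ} (hh : 0 < h) :
    ∫⁻ x : ℝ, edist (φ (x + h)) (φ x) ≤ ENNReal.ofReal h * eVariationOn φ Set.univ := by
  set f : ℝ → ℝ≥0∞ := fun x => edist (φ (x + h)) (φ x) with hf
  have hcover : (⋃ n : ℤ, Set.Ico ((n : ℝ) * h) ((n : ℝ) * h + h)) = Set.univ := by
    ext x
    simp only [Set.mem_iUnion, Set.mem_Ico, Set.mem_univ, iff_true]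
    refine ⟨⌊x / h⌋, ?_, ?_⟩
    · calc ((⌊x / h⌋ : ℝ)) * h ≤ (x / h) * h :=
            mul_le_mul_of_nonneg_right (Int.floor_le _) hh.le
        _ = x := div_mul_cancel₀ x hh.ne'
    · have h1 : x / h < ⌊x / h⌋ + 1 := Int.lt_floor_add_one _
      have h2 : (x / h) * h < ((⌊x / h⌋ : ℝ) + 1) * h := by
        exact mul_lt_mul_of_pos_right h1 hh
      rw [div_mul_cancel₀ x hh.ne'] at h2
      linarith
  have hdisj : Pairwise (Function.onFun Disjoint fun n : ℤ => Set.Ico ((n:ℝ)*h) ((n:ℝ)*h + h)) := by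
    intro m n hmn
    simp only [Function.onFun]
    rw [Set.Ico_disjoint_Ico]
    rcases hmn.lt_or_gt with H | H
    · have : ((m:ℝ) + 1) ≤ (n:ℝ) := by exact_mod_cast H
      refine le_trans (min_le_left _ _) (le_trans ?_ (le_max_right _ _))
      nlinarith
    · have : ((n:ℝ) + 1) ≤ (m:ℝ) := by exact_mod_cast H
      refine le_trans (min_le_right _ _) (le_trans ?_ (le_max_left _ _))
      nlinarith
  calc ∫⁻ x, f x = ∫⁻ x in Set.univ, f x := (setLIntegral_univ f).symm
    _ = ∫⁻ x in ⋃ n : ℤ, Set.Ico ((n:ℝ)*h) ((n:ℝ)*h + h), f x := by rw [hcover]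
    _ = ∑' n : ℤ, ∫⁻ x in Set.Ico ((n:ℝ)*h) ((n:ℝ)*h + h), f x := by
        rw [Measure.restrict_iUnion hdisj (fun n => measurableSet_Ico), lintegral_sum_measure]
    _ = ∑' n : ℤ, ∫⁻ x in Set.Ico (0:ℝ) h, f (x + (n:ℝ)*h) := by
        refine tsum_congr fun n => ?_
        have := lint_shift_Ico f ((n:ℝ)*h) ((n:ℝ)*h + h) ((n:ℝ)*h)
        simpa using this
    _ ≤ ENNReal.ofReal h * eVariationOn φ Set.univ := by
        rw [ENNReal.tsum_eq_iSup_sum]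
        refine iSup_le fun F => ?_
        calc ∑ n ∈ F, ∫⁻ x in Set.Ico (0:ℝ) h, f (x + (n:ℝ)*h)
            ≤ ∫⁻ x in Set.Ico (0:ℝ) h, ∑ n ∈ F, f (x + (n:ℝ)*h) :=
              finset_sum_lintegral_le F (fun n x => f (x + (n:ℝ)*h)) _
          _ ≤ ∫⁻ _ in Set.Ico (0:ℝ) h, eVariationOn φ Set.univ := by
              refine lintegral_mono fun x => ?_
              have := sum_edist_le_variation φ hh.le x F
              refine le_trans (le_of_eq ?_) this
              refine Finset.sum_congr rfl fun n _ => ?_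
              simp only [hf]
          _ = eVariationOn φ Set.univ * volume (Set.Ico (0:ℝ) h) := setLIntegral_const _ _
          _ = ENNReal.ofReal h * eVariationOn φ Set.univ := by
              rw [Real.volume_Ico, sub_zero, mul_comm]

lemma lint_edist_add_le' (φ : ℝ → ℝ) (h : ℝ) :
    ∫⁻ x : ℝ, edist (φ (x + h)) (φ x) ≤ ENNReal.ofReal |h| * eVariationOn φ Set.univ := by
  rcases lt_trichotomy h 0 with hneg | rfl | hpos
  · have key := lint_edist_add_le φ (neg_pos.mpr hneg)
    have e : ∫⁻ x : ℝ, edist (φ (x + h)) (φ x) = ∫⁻ x : ℝ, edist (φ (x + -h)) (φ x) := by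
      rw [← lint_shift (fun x => edist (φ (x + h)) (φ x)) (-h)]
      refine lintegral_congr fun x => ?_
      rw [show x + -h + h = x by ring]
      exact edist_comm _ _
    rw [e, abs_of_neg hneg]
    exact key
  · simp
  · rw [abs_of_pos hpos]
    exact lint_edist_add_le φ hpos
/-- The fractional Laplacian `L[φ](x) = c_λ ∫_{z ≠ 0} (φ(x+z) − φ(x))/|z|^{1+λ} dz`. -/
noncomputable def fracLap (clam lam : ℝ) (φ : ℝ → ℝ) (x : ℝ) : ℝ :=
  clam * ∫ z in ({0}ᶜ : Set ℝ), (φ (x + z) - φ x) / |z| ^ (1 + lam)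

/-- Absolute convergence of the integral defining the fractional Laplacian at `x`. -/
def fracLapConv (lam : ℝ) (φ : ℝ → ℝ) (x : ℝ) : Prop :=
  IntegrableOn (fun z : ℝ => (φ (x + z) - φ x) / |z| ^ (1 + lam)) ({0}ᶜ : Set ℝ)

/-- For every `λ ∈ (0,1)` there is `C = C(λ) > 0` such that for every `c_λ > 0` and every
`φ ∈ L¹(ℝ) ∩ BV(ℝ)`: the integral defining `L[φ](x)` converges absolutely for a.e. `x`,
`L[φ] ∈ L¹(ℝ)`, and `∫ |L[φ]| ≤ c_λ C ‖φ‖_{L¹}^{1−λ} |φ|_{BV}^{λ}`. -/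
theorem fracLap_L1_estimate (lam : ℝ) (hlam : lam ∈ Set.Ioo (0 : ℝ) 1) :
    ∃ C : ℝ, 0 < C ∧
      ∀ (clam : ℝ), 0 < clam →
        ∀ φ : ℝ → ℝ, Integrable φ → eVariationOn φ Set.univ ≠ ⊤ →
          (∀ᵐ x : ℝ, fracLapConv lam φ x) ∧
          Integrable (fracLap clam lam φ) ∧
          ∫ x : ℝ, |fracLap clam lam φ x| ≤
            clam * C * (∫ x : ℝ, |φ x|) ^ (1 - lam) *
              (eVariationOn φ Set.univ).toReal ^ lam := by
  obtain ⟨hlam0, hlam1⟩ := hlam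
  have h1l : 0 < 1 - lam := by linarith
  set C : ℝ := 2 / (1 - lam) + 4 / lam with hC_def
  have hCpos : 0 < C := by positivity
  refine ⟨C, hCpos, ?_⟩
  intro clam hclam φ hφ hBV
  set A : ℝ := ∫ x : ℝ, |φ x| with hA_def
  have hA0 : 0 ≤ A := integral_nonneg fun x => abs_nonneg _
  set Vr : ℝ := (eVariationOn φ Set.univ).toReal with hVr_def
  have hVr0 : 0 ≤ Vr := ENNReal.toReal_nonneg
  have hVof : eVariationOn φ Set.univ = ENNReal.ofReal Vr := (ENNReal.ofReal_toReal hBV).symm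
  set w : ℝ → ℝ≥0∞ := fun z => ENNReal.ofReal (|z| ^ (1 + lam)) with hw_def
  have hφm : AEMeasurable φ (volume : Measure ℝ) := hφ.aemeasurable
  -- measurability facts
  have habsm : Measurable fun z : ℝ => |z| ^ (1 + lam) :=
    (measurable_id.abs (α := ℝ)).pow_const (1 + lam)
  have hwinvm : Measurable fun z : ℝ => (w z)⁻¹ := (habsm.ennreal_ofReal).inv
  have hφ1 : AEMeasurable (fun p : ℝ × ℝ => φ p.1)
      ((volume : Measure ℝ).prod (volume : Measure ℝ)) :=
    hφm.comp_quasiMeasurePreserving Measure.quasiMeasurePreserving_fst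
  have hφ2 : AEMeasurable (fun p : ℝ × ℝ => φ (p.1 + p.2))
      ((volume : Measure ℝ).prod (volume : Measure ℝ)) := by
    have hT : MeasurePreserving (fun p : ℝ × ℝ => (p.1, p.1 + p.2))
        ((volume : Measure ℝ).prod (volume : Measure ℝ))
        ((volume : Measure ℝ).prod (volume : Measure ℝ)) :=
      measurePreserving_prod_add (volume : Measure ℝ) (volume : Measure ℝ)
    have h1 : AEMeasurable (fun p : ℝ × ℝ => φ p.2)
        ((volume : Measure ℝ).prod (volume : Measure ℝ)) :=
      hφm.comp_quasiMeasurePreserving Measure.quasiMeasurePreserving_snd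
    exact h1.comp_quasiMeasurePreserving hT.quasiMeasurePreserving
  -- joint function for Tonelli
  set G : ℝ × ℝ → ℝ≥0∞ := fun p => edist (φ (p.1 + p.2)) (φ p.1) * (w p.2)⁻¹ with hG_def
  have hG : AEMeasurable G ((volume : Measure ℝ).prod (volume : Measure ℝ)) :=
    (hφ2.edist hφ1).mul ((hwinvm.comp measurable_snd).aemeasurable)
  set Φ : ℝ≥0∞ := ∫⁻ x : ℝ, ∫⁻ z : ℝ, G (x, z) with hΦ_def
  have hswap : Φ = ∫⁻ z : ℝ, ∫⁻ x : ℝ, G (x, z) :=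
    lintegral_lintegral_swap (f := fun x z => G (x, z)) hG
  -- bounds on the inner (x-)integral
  have hIof : ENNReal.ofReal A = ∫⁻ x : ℝ, (‖φ x‖₊ : ℝ≥0∞) := by
    have := ofReal_integral_norm_eq_lintegral_enorm hφ
    simp only [Real.norm_eq_abs] at this
    exact this
  have hM2 : ∀ z : ℝ, (∫⁻ x : ℝ, edist (φ (x + z)) (φ x)) ≤ ENNReal.ofReal (2 * A) := by
    intro z
    have hφz : AEMeasurable (fun x : ℝ => φ (x + z)) (volume : Measure ℝ) :=
      hφm.comp_quasiMeasurePreserving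
        (measurePreserving_add_right (volume : Measure ℝ) z).quasiMeasurePreserving
    have hpt : ∀ x : ℝ, edist (φ (x + z)) (φ x)
        ≤ (‖φ (x + z)‖₊ : ℝ≥0∞) + (‖φ x‖₊ : ℝ≥0∞) := by
      intro x
      rw [edist_nndist, nndist_eq_nnnorm, ← ENNReal.coe_add]
      exact_mod_cast nnnorm_sub_le _ _
    calc ∫⁻ x : ℝ, edist (φ (x + z)) (φ x)
        ≤ ∫⁻ x : ℝ, ((‖φ (x + z)‖₊ : ℝ≥0∞) + (‖φ x‖₊ : ℝ≥0∞)) := lintegral_mono hpt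
      _ = (∫⁻ x : ℝ, (‖φ (x + z)‖₊ : ℝ≥0∞)) + ∫⁻ x : ℝ, (‖φ x‖₊ : ℝ≥0∞) :=
          lintegral_add_left' hφz.enorm _
      _ = (∫⁻ x : ℝ, (‖φ x‖₊ : ℝ≥0∞)) + ∫⁻ x : ℝ, (‖φ x‖₊ : ℝ≥0∞) := by
          rw [lint_shift (fun x => (‖φ x‖₊ : ℝ≥0∞)) z]
      _ = ENNReal.ofReal (2 * A) := by
          rw [← hIof, ← ENNReal.ofReal_add hA0 hA0]
          ring_nf
  have hM1 : ∀ z : ℝ, (∫⁻ x : ℝ, edist (φ (x + z)) (φ x)) ≤ ENNReal.ofReal (|z| * Vr) := by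
    intro z
    have := lint_edist_add_le' φ z
    rwa [hVof, ← ENNReal.ofReal_mul (abs_nonneg z)] at this
  have hMmin : ∀ z : ℝ, (∫⁻ x : ℝ, edist (φ (x + z)) (φ x))
      ≤ ENNReal.ofReal (min (2 * A) (|z| * Vr)) := by
    intro z
    rcases le_total (2 * A) (|z| * Vr) with hle | hle
    · rw [min_eq_left hle]; exact hM2 z
    · rw [min_eq_right hle]; exact hM1 z
  set bfun : ℝ → ℝ≥0∞ := fun z => ENNReal.ofReal (min (2 * A) (|z| * Vr)) * (w z)⁻¹
    with hbfun_def
  have hinner : ∀ z : ℝ, (∫⁻ x : ℝ, G (x, z)) ≤ bfun z := by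
    intro z
    by_cases hz : z = 0
    · subst hz
      have : ∀ x : ℝ, G (x, 0) = 0 := by
        intro x
        simp [hG_def, add_zero]
      simp only [this, lintegral_zero]
      exact zero_le'
    · have hwpos : 0 < |z| ^ (1 + lam) := Real.rpow_pos_of_pos (abs_pos.mpr hz) _
      have hwnt : (w z)⁻¹ ≠ ⊤ := by
        simp only [hw_def, ne_eq, ENNReal.inv_eq_top]
        exact (ENNReal.ofReal_pos.mpr hwpos).ne'
      calc ∫⁻ x : ℝ, G (x, z)
          = (∫⁻ x : ℝ, edist (φ (x + z)) (φ x)) * (w z)⁻¹ :=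
            lintegral_mul_const' _ _ hwnt
        _ ≤ bfun z := mul_le_mul_left (hMmin z) _
  have hΦle1 : Φ ≤ ∫⁻ z : ℝ, bfun z := by
    rw [hswap]; exact lintegral_mono hinner
  -- the main quantitative bound
  have hΦB : Φ ≤ ENNReal.ofReal (C * (A ^ (1 - lam) * Vr ^ lam)) := by
    rcases eq_or_lt_of_le hA0 with hA | hA
    · -- degenerate case: φ = 0 a.e.
      have hφ0 : φ =ᵐ[volume] 0 := by
        have h01 : ∫ x : ℝ, |φ x| = 0 := hA.symm
        have h02 := (integral_eq_zero_iff_of_nonneg_ae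
          (Eventually.of_forall fun x => abs_nonneg (φ x)) hφ.abs).mp h01
        filter_upwards [h02] with x hx
        simpa [abs_eq_zero] using hx
      have hzero : ∀ z : ℝ, (∫⁻ x : ℝ, G (x, z)) = 0 := by
        intro z
        have hz1 : (fun x : ℝ => φ (x + z)) =ᵐ[volume] 0 := by
          have := (measurePreserving_add_right (volume : Measure ℝ) z)
            |>.quasiMeasurePreserving.ae_eq_comp hφ0
          exact this
        have : ∀ᵐ x : ℝ ∂volume, G (x, z) = 0 := by
          filter_upwards [hz1, hφ0] with x h1 h2
          simp [hG_def, h1, h2]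
        rw [lintegral_congr_ae this, lintegral_zero]
      rw [hswap]
      simp only [hzero, lintegral_zero]
      exact zero_le'
    · -- main case: A > 0, and then Vr > 0
      have hVne : eVariationOn φ Set.univ ≠ 0 := by
        intro h0
        have hconst := (eVariationOn.eq_zero_iff φ (s := Set.univ)).mp h0
        have hφeq : ∀ x : ℝ, φ x = φ 0 := fun x =>
          edist_eq_zero.mp (hconst x trivial 0 trivial)
        have hInt0 : Integrable (fun _ : ℝ => φ 0) (volume : Measure ℝ) :=
          hφ.congr (Eventually.of_forall fun x => hφeq x)
        rcases integrable_const_iff.mp hInt0 with hc | hfin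
        · have hA00 : A = 0 := by
            rw [hA_def]
            have he : ∀ x : ℝ, |φ x| = 0 := fun x => by rw [hφeq x, hc, abs_zero]
            simp [he]
          exact absurd hA00 (ne_of_gt hA)
        · exact absurd (@measure_lt_top _ _ volume hfin Set.univ) (by simp [Real.volume_univ])
      have hVrpos : 0 < Vr := ENNReal.toReal_pos hVne hBV
      set r : ℝ := A / Vr with hr_def
      have hrpos : 0 < r := div_pos hA hVrpos
      -- pointwise bounds on bfun on the two regions
      have hbound1 : ∀ z ∈ Set.Ioc (0:ℝ) r, bfun z ≤ ENNReal.ofReal (Vr * z ^ (-lam)) := by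
        intro z hz
        have hz0 : 0 < z := hz.1
        have habs : |z| = z := abs_of_pos hz0
        have hwz : (w z)⁻¹ = ENNReal.ofReal (z ^ (-(1 + lam))) := by
          rw [hw_def]
          simp only [habs]
          rw [Real.rpow_neg hz0.le, ENNReal.ofReal_inv_of_pos (Real.rpow_pos_of_pos hz0 _)]
        have h1 : bfun z ≤ ENNReal.ofReal (Vr * z) * (w z)⁻¹ := by
          refine mul_le_mul_left (ENNReal.ofReal_le_ofReal ?_) _
          rw [habs]
          exact (min_le_right _ _).trans (le_of_eq (mul_comm _ _))
        refine h1.trans (le_of_eq ?_)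
        rw [hwz, ← ENNReal.ofReal_mul (by positivity)]
        congr 1
        have hzz : z * z ^ (-(1 + lam)) = z ^ (-lam) := by
          have h2 : z ^ ((1:ℝ) + -(1 + lam)) = z ^ (1:ℝ) * z ^ (-(1 + lam)) :=
            Real.rpow_add hz0 _ _
          rw [Real.rpow_one] at h2
          rw [← h2]
          congr 1
          ring
        rw [mul_assoc, hzz]
      have hbound2 : ∀ z ∈ Set.Ioi r, bfun z ≤ ENNReal.ofReal ((2 * A) * z ^ (-(1 + lam))) := by
        intro z hz
        have hz0 : 0 < z := lt_trans hrpos hz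
        have habs : |z| = z := abs_of_pos hz0
        have hwz : (w z)⁻¹ = ENNReal.ofReal (z ^ (-(1 + lam))) := by
          rw [hw_def]
          simp only [habs]
          rw [Real.rpow_neg hz0.le, ENNReal.ofReal_inv_of_pos (Real.rpow_pos_of_pos hz0 _)]
        have h1 : bfun z ≤ ENNReal.ofReal (2 * A) * (w z)⁻¹ :=
          mul_le_mul_left (ENNReal.ofReal_le_ofReal (min_le_left _ _)) _
        refine h1.trans (le_of_eq ?_)
        rw [hwz, ← ENNReal.ofReal_mul (by positivity)]
      -- integrals on the two regions
      have hint1 : IntegrableOn (fun z : ℝ => Vr * z ^ (-lam)) (Set.Ioc 0 r) volume := by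
        have hii : IntervalIntegrable (fun z : ℝ => z ^ (-lam)) volume 0 r :=
          intervalIntegral.intervalIntegrable_rpow' (by linarith)
        rw [intervalIntegrable_iff_integrableOn_Ioc_of_le hrpos.le] at hii
        exact hii.const_mul Vr
      have hval1 : ∫ z in Set.Ioc (0:ℝ) r, Vr * z ^ (-lam) = Vr * r ^ (1 - lam) / (1 - lam) := by
        rw [integral_const_mul]
        rw [← _root_.intervalIntegral.integral_of_le hrpos.le]
        rw [integral_rpow (Or.inl (by linarith))]
        rw [Real.zero_rpow (by linarith : -lam + 1 ≠ 0)]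
        rw [show -lam + 1 = 1 - lam by ring]
        ring
      have hint2 : IntegrableOn (fun z : ℝ => (2 * A) * z ^ (-(1 + lam))) (Set.Ioi r) volume :=
        (integrableOn_Ioi_rpow_of_lt (by linarith) hrpos).const_mul _
      have hval2 : ∫ z in Set.Ioi r, (2 * A) * z ^ (-(1 + lam))
          = 2 * A * (r ^ (-lam) / lam) := by
        rw [integral_const_mul]
        rw [integral_Ioi_rpow_of_lt (by linarith) hrpos]
        rw [show -(1 + lam) + 1 = -lam by ring]
        rw [neg_div_neg_eq]
      -- assemble the z-integral bound
      have hsplit : (∫⁻ z : ℝ, bfun z)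
          ≤ 2 * ((∫⁻ z in Set.Ioc (0:ℝ) r, bfun z) + ∫⁻ z in Set.Ioi r, bfun z) := by
        have hmb : ∀ z : ℝ, bfun (-z) = bfun z := by
          intro z; simp only [hbfun_def, hw_def, abs_neg]
        have hneg : (∫⁻ z in Set.Iio (0:ℝ), bfun z) = ∫⁻ z in Set.Ioi (0:ℝ), bfun z := by
          rw [lint_neg_Iio bfun]
          exact lintegral_congr fun z => hmb z
        have hIci : (∫⁻ z in Set.Ici (0:ℝ), bfun z) = ∫⁻ z in Set.Ioi (0:ℝ), bfun z := by
          rw [Measure.restrict_congr_set (Ioi_ae_eq_Ici (a := (0:ℝ))).symm]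
        have htotal : (∫⁻ z : ℝ, bfun z)
            = (∫⁻ z in Set.Iio (0:ℝ), bfun z) + ∫⁻ z in Set.Ici (0:ℝ), bfun z := by
          rw [← lintegral_add_compl bfun measurableSet_Iio, compl_Iio]
        have hIoi : (∫⁻ z in Set.Ioi (0:ℝ), bfun z)
            = (∫⁻ z in Set.Ioc (0:ℝ) r, bfun z) + ∫⁻ z in Set.Ioi r, bfun z := by
          rw [← Set.Ioc_union_Ioi_eq_Ioi hrpos.le,
            lintegral_union measurableSet_Ioi (Set.Ioc_disjoint_Ioi le_rfl)]
        rw [htotal, hneg, hIci, hIoi, two_mul]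
      have hpiece1 : (∫⁻ z in Set.Ioc (0:ℝ) r, bfun z)
          ≤ ENNReal.ofReal (Vr * r ^ (1 - lam) / (1 - lam)) := by
        calc (∫⁻ z in Set.Ioc (0:ℝ) r, bfun z)
            ≤ ∫⁻ z in Set.Ioc (0:ℝ) r, ENNReal.ofReal (Vr * z ^ (-lam)) := by
              refine lintegral_mono_ae ?_
              filter_upwards [ae_restrict_mem measurableSet_Ioc] with z hz
              exact hbound1 z hz
          _ = ENNReal.ofReal (∫ z in Set.Ioc (0:ℝ) r, Vr * z ^ (-lam)) := by
              rw [← ofReal_integral_eq_lintegral_ofReal hint1 ?_]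
              filter_upwards [ae_restrict_mem measurableSet_Ioc] with z hz
              have : (0:ℝ) < z ^ (-lam) := Real.rpow_pos_of_pos hz.1 _
              positivity
          _ = ENNReal.ofReal (Vr * r ^ (1 - lam) / (1 - lam)) := by rw [hval1]
      have hpiece2 : (∫⁻ z in Set.Ioi r, bfun z)
          ≤ ENNReal.ofReal (2 * A * (r ^ (-lam) / lam)) := by
        calc (∫⁻ z in Set.Ioi r, bfun z)
            ≤ ∫⁻ z in Set.Ioi r, ENNReal.ofReal ((2 * A) * z ^ (-(1 + lam))) := by
              refine lintegral_mono_ae ?_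
              filter_upwards [ae_restrict_mem measurableSet_Ioi] with z hz
              exact hbound2 z hz
          _ = ENNReal.ofReal (∫ z in Set.Ioi r, (2 * A) * z ^ (-(1 + lam))) := by
              rw [← ofReal_integral_eq_lintegral_ofReal hint2 ?_]
              filter_upwards [ae_restrict_mem measurableSet_Ioi] with z hz
              have hz0 : (0:ℝ) < z := lt_trans hrpos hz
              have : (0:ℝ) < z ^ (-(1 + lam)) := Real.rpow_pos_of_pos hz0 _
              positivity
          _ = ENNReal.ofReal (2 * A * (r ^ (-lam) / lam)) := by rw [hval2]
      -- real arithmetic with r = A / Vr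
      have key1 : Vr * r ^ (1 - lam) = A ^ (1 - lam) * Vr ^ lam := by
        rw [hr_def, Real.div_rpow hA0 hVr0]
        have hv : Vr ^ lam = Vr ^ (1:ℝ) / Vr ^ (1 - lam) := by
          rw [← Real.rpow_sub hVrpos]
          congr 1
          ring
        rw [hv, Real.rpow_one]
        ring
      have key2 : A * r ^ (-lam) = A ^ (1 - lam) * Vr ^ lam := by
        rw [hr_def, Real.div_rpow hA0 hVr0]
        have h1 : A * (A ^ (-lam) / Vr ^ (-lam)) = (A * A ^ (-lam)) * (Vr ^ (-lam))⁻¹ := by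
          ring
        rw [h1]
        have h2 : A * A ^ (-lam) = A ^ (1 - lam) := by
          have h3 : A ^ ((1:ℝ) + -lam) = A ^ (1:ℝ) * A ^ (-lam) := Real.rpow_add hA _ _
          rw [Real.rpow_one] at h3
          rw [← h3]
          congr 1
        have h4 : ((Vr ^ (-lam) : ℝ))⁻¹ = Vr ^ lam := by
          rw [Real.rpow_neg hVr0, inv_inv]
        rw [h2, h4]
      calc Φ ≤ ∫⁻ z : ℝ, bfun z := hΦle1
        _ ≤ 2 * ((∫⁻ z in Set.Ioc (0:ℝ) r, bfun z) + ∫⁻ z in Set.Ioi r, bfun z) := hsplit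
        _ ≤ 2 * (ENNReal.ofReal (Vr * r ^ (1 - lam) / (1 - lam))
              + ENNReal.ofReal (2 * A * (r ^ (-lam) / lam))) :=
            mul_le_mul_right (add_le_add hpiece1 hpiece2) 2
        _ = ENNReal.ofReal (2 * (Vr * r ^ (1 - lam) / (1 - lam)
              + 2 * A * (r ^ (-lam) / lam))) := by
            rw [← ENNReal.ofReal_add (by positivity) (by positivity),
              ← ENNReal.ofReal_ofNat 2, ← ENNReal.ofReal_mul (by norm_num)]
        _ = ENNReal.ofReal (C * (A ^ (1 - lam) * Vr ^ lam)) := by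
            congr 1
            rw [hC_def]
            have e1 : Vr * r ^ (1 - lam) / (1 - lam)
                = (A ^ (1 - lam) * Vr ^ lam) / (1 - lam) := by rw [← key1]
            have e2 : 2 * A * (r ^ (-lam) / lam)
                = 2 * (A ^ (1 - lam) * Vr ^ lam) / lam := by rw [← key2]; ring
            rw [e1, e2]
            field_simp
            ring
  -- `Φ ≤ ofReal B` established; now the conclusions
  have hΦne : Φ ≠ ⊤ := (lt_of_le_of_lt hΦB ENNReal.ofReal_lt_top).ne
  -- pointwise identity between the ennnorm of the integrand and G
  have hptw : ∀ x z : ℝ, z ≠ 0 →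
      ((‖(φ (x + z) - φ x) / |z| ^ (1 + lam)‖₊ : ℝ≥0∞)) = G (x, z) := by
    intro x z hz
    have hc : 0 < |z| ^ (1 + lam) := Real.rpow_pos_of_pos (abs_pos.mpr hz) _
    show ‖(φ (x + z) - φ x) / |z| ^ (1 + lam)‖ₑ = edist (φ (x + z)) (φ x) * (w z)⁻¹
    rw [Real.enorm_eq_ofReal_abs, abs_div, abs_of_pos hc,
      ENNReal.ofReal_div_of_pos hc, edist_dist, Real.dist_eq, hw_def]
    rw [div_eq_mul_inv]
  have hae0 : ∀ᵐ z : ℝ ∂(volume : Measure ℝ), z ≠ 0 := by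
    rw [ae_iff]
    simp only [ne_eq, not_not]
    rw [show {z : ℝ | z = 0} = {(0:ℝ)} from rfl]
    exact measure_singleton 0
  have hlint_eq : ∀ x : ℝ,
      (∫⁻ z : ℝ, (‖(φ (x + z) - φ x) / |z| ^ (1 + lam)‖₊ : ℝ≥0∞))
        = ∫⁻ z : ℝ, G (x, z) := by
    intro x
    refine lintegral_congr_ae ?_
    filter_upwards [hae0] with z hz using hptw x z hz
  -- a.e. finiteness of the inner integral
  have hfin : ∀ᵐ x : ℝ, (∫⁻ z : ℝ, G (x, z)) < ⊤ := by
    have h1 : (∫⁻ x : ℝ, ∫⁻ z : ℝ, hG.mk G (x, z)) = Φ := by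
      refine lintegral_congr_ae ?_
      filter_upwards [Measure.ae_ae_of_ae_prod hG.ae_eq_mk] with x hx
      exact (lintegral_congr_ae hx).symm
    have h2 : ∀ᵐ x : ℝ, (∫⁻ z : ℝ, hG.mk G (x, z)) < ⊤ := by
      refine ae_lt_top (hG.measurable_mk.lintegral_prod_right') ?_
      rw [h1]; exact hΦne
    filter_upwards [h2, Measure.ae_ae_of_ae_prod hG.ae_eq_mk] with x h2x hx
    rw [lintegral_congr_ae hx]
    exact h2x
  -- measurable representative
  set g : ℝ → ℝ := hφm.mk φ with hg_def
  have hgm : Measurable g := hφm.measurable_mk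
  have hfg : φ =ᵐ[volume] g := hφm.ae_eq_mk
  -- a.e. convergence
  have hconv : ∀ᵐ x : ℝ, fracLapConv lam φ x := by
    filter_upwards [hfin] with x hx
    unfold fracLapConv
    rw [IntegrableOn, restrict_compl_singleton]
    constructor
    · have hzz : (fun z : ℝ => φ (x + z)) =ᵐ[volume] fun z : ℝ => g (x + z) := by
        have := (measurePreserving_add_left (volume : Measure ℝ) x)
          |>.quasiMeasurePreserving.ae_eq_comp hfg
        simpa [Function.comp_def] using this
      have hm2 : AEStronglyMeasurable
          (fun z : ℝ => (g (x + z) - φ x) / |z| ^ (1 + lam)) (volume : Measure ℝ) :=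
        (((hgm.comp (measurable_const_add x)).sub measurable_const).div
          habsm).aestronglyMeasurable
      refine hm2.congr ?_
      filter_upwards [hzz] with z hz
      rw [hz]
    · show (∫⁻ z : ℝ, (‖(φ (x + z) - φ x) / |z| ^ (1 + lam)‖₊ : ℝ≥0∞)) < ⊤
      rw [hlint_eq x]
      exact hx
  -- rewrite fracLap via the full measure
  have hfrac_eq : fracLap clam lam φ
      = fun x : ℝ => clam * ∫ z : ℝ, (φ (x + z) - φ x) / |z| ^ (1 + lam) := by
    funext x
    simp only [fracLap]
    rw [restrict_compl_singleton]
  have hmeasF : AEStronglyMeasurable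
      (fun p : ℝ × ℝ => (φ (p.1 + p.2) - φ p.1) / |p.2| ^ (1 + lam))
      ((volume : Measure ℝ).prod volume) :=
    ((hφ2.sub hφ1).div ((habsm.comp measurable_snd).aemeasurable)).aestronglyMeasurable
  have hmeas_frac : AEStronglyMeasurable (fracLap clam lam φ) (volume : Measure ℝ) := by
    rw [hfrac_eq]
    exact (hmeasF.integral_prod_right').const_mul clam
  have hkey : ∀ x : ℝ, (‖fracLap clam lam φ x‖₊ : ℝ≥0∞)
      ≤ ENNReal.ofReal clam * ∫⁻ z : ℝ, G (x, z) := by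
    intro x
    rw [hfrac_eq]
    calc (‖clam * ∫ z : ℝ, (φ (x + z) - φ x) / |z| ^ (1 + lam)‖₊ : ℝ≥0∞)
        = ENNReal.ofReal clam * (‖∫ z : ℝ, (φ (x + z) - φ x) / |z| ^ (1 + lam)‖₊ : ℝ≥0∞) := by
          rw [nnnorm_mul, ENNReal.coe_mul]
          congr 1
          show ‖clam‖ₑ = _
          rw [Real.enorm_eq_ofReal_abs, abs_of_pos hclam]
      _ ≤ ENNReal.ofReal clam * ∫⁻ z : ℝ, (‖(φ (x + z) - φ x) / |z| ^ (1 + lam)‖₊ : ℝ≥0∞) :=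
          mul_le_mul_right (enorm_integral_le_lintegral_enorm _) _
      _ = ENNReal.ofReal clam * ∫⁻ z : ℝ, G (x, z) := by rw [hlint_eq x]
  have hlintfrac : (∫⁻ x : ℝ, (‖fracLap clam lam φ x‖₊ : ℝ≥0∞))
      ≤ ENNReal.ofReal clam * ENNReal.ofReal (C * (A ^ (1 - lam) * Vr ^ lam)) := by
    calc (∫⁻ x : ℝ, (‖fracLap clam lam φ x‖₊ : ℝ≥0∞))
        ≤ ∫⁻ x : ℝ, ENNReal.ofReal clam * ∫⁻ z : ℝ, G (x, z) := lintegral_mono hkey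
      _ = ENNReal.ofReal clam * Φ := lintegral_const_mul' _ _ ENNReal.ofReal_ne_top
      _ ≤ _ := mul_le_mul_right hΦB _
  have hint : Integrable (fracLap clam lam φ) (volume : Measure ℝ) := by
    refine ⟨hmeas_frac, ?_⟩
    show (∫⁻ x : ℝ, (‖fracLap clam lam φ x‖₊ : ℝ≥0∞)) < ⊤
    exact lt_of_le_of_lt hlintfrac
      (ENNReal.mul_lt_top ENNReal.ofReal_lt_top ENNReal.ofReal_lt_top)
  refine ⟨hconv, hint, ?_⟩
  have hBnn : 0 ≤ C * (A ^ (1 - lam) * Vr ^ lam) :=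
    mul_nonneg hCpos.le (mul_nonneg (Real.rpow_nonneg hA0 _) (Real.rpow_nonneg hVr0 _))
  calc ∫ x : ℝ, |fracLap clam lam φ x|
      = ∫ x : ℝ, ‖fracLap clam lam φ x‖ := by simp only [Real.norm_eq_abs]
    _ = (∫⁻ x : ℝ, (‖fracLap clam lam φ x‖₊ : ℝ≥0∞)).toReal :=
        integral_norm_eq_lintegral_enorm hmeas_frac
    _ ≤ (ENNReal.ofReal clam * ENNReal.ofReal (C * (A ^ (1 - lam) * Vr ^ lam))).toReal := by
        refine ENNReal.toReal_mono ?_ hlintfrac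
        exact ENNReal.mul_ne_top ENNReal.ofReal_ne_top ENNReal.ofReal_ne_top
    _ = clam * (C * (A ^ (1 - lam) * Vr ^ lam)) := by
        rw [← ENNReal.ofReal_mul hclam.le, ENNReal.toReal_ofReal (mul_nonneg hclam.le hBnn)]
    _ = clam * C * A ^ (1 - lam) * Vr ^ lam := by ring
end

section
/- For all φ, ψ ∈ L¹(ℝ) ∩ BV(ℝ), the integrals ∫_ℝ ψ(x) L[φ](x) dx and ∫_ℝ φ(x) L[ψ](x) dx converge absolutely and are equal: ∫_ℝ ψ L[φ] dx = ∫_ℝ φ L[ψ] dx. -/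
open MeasureTheory Filter Set
open scoped ENNReal NNReal

lemma bv_bounded (f : ℝ → ℝ) (hf : eVariationOn f Set.univ ≠ ⊤) :
    ∃ M : ℝ, 0 ≤ M ∧ ∀ x, |f x| ≤ M := by
  refine ⟨|f 0| + (eVariationOn f Set.univ).toReal, by positivity, fun x => ?_⟩
  have h1 : dist (f x) (f 0) ≤ (eVariationOn f Set.univ).toReal := by
    rw [dist_edist]
    exact ENNReal.toReal_mono hf (eVariationOn.edist_le f (mem_univ x) (mem_univ 0))
  have h2 : |f x| ≤ |f 0| + |f x - f 0| := by
    have := abs_add_le (f 0) (f x - f 0); simpa using this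
  rw [Real.dist_eq] at h1
  linarith

lemma tsum_incr_le (f : ℝ → ℝ) (y z : ℝ) (hz : 0 < z) :
    ∑' k : ℤ, (‖f (y + (k + 1) * z) - f (y + k * z)‖₊ : ℝ≥0∞) ≤ eVariationOn f Set.univ := by
  rw [ENNReal.tsum_eq_iSup_sum]
  refine iSup_le fun F => ?_
  set N : ℕ := F.sup fun k => k.natAbs with hN
  have hsub : F ⊆ Finset.Icc (-(N : ℤ)) N := by
    intro k hk
    have : k.natAbs ≤ N := Finset.le_sup (f := fun k : ℤ => k.natAbs) hk
    simp only [Finset.mem_Icc]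
    omega
  set u : ℕ → ℝ := fun i => y + ((i : ℝ) - N) * z with hu
  calc ∑ k ∈ F, (‖f (y + (k + 1) * z) - f (y + k * z)‖₊ : ℝ≥0∞)
      ≤ ∑ k ∈ Finset.Icc (-(N : ℤ)) N, (‖f (y + (k + 1) * z) - f (y + k * z)‖₊ : ℝ≥0∞) :=
        Finset.sum_le_sum_of_subset hsub
    _ = ∑ i ∈ Finset.range (2 * N + 1), edist (f (u (i + 1))) (f (u i)) := by
        refine Finset.sum_bij (fun (k : ℤ) (_ : k ∈ Finset.Icc (-(N:ℤ)) N) => (k + N).toNat)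
          ?_ ?_ ?_ ?_
        · intro k hk
          simp only [Finset.mem_Icc] at hk
          simp only [Finset.mem_range]; omega
        · intro a ha b hb h
          simp only [Finset.mem_Icc] at ha hb
          omega
        · intro i hi
          simp only [Finset.mem_range] at hi
          refine ⟨(i : ℤ) - N, ?_, by omega⟩
          simp only [Finset.mem_Icc]; omega
        · intro k hk
          simp only [Finset.mem_Icc] at hk
          have hc : (((k + (N : ℤ)).toNat : ℝ)) = (k : ℝ) + N := by
            exact_mod_cast congrArg (Int.cast : ℤ → ℝ) (Int.toNat_of_nonneg (by omega))
          have h1 : u ((k + (N : ℤ)).toNat) = y + k * z := by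
            simp only [hu, hc]; ring
          have h2 : u ((k + (N : ℤ)).toNat + 1) = y + (k + 1) * z := by
            simp only [hu]; push_cast [hc]; ring
          rw [edist_eq_enorm_sub, h1, h2]; rfl
    _ ≤ eVariationOn f Set.univ := by
        refine eVariationOn.sum_le (f := f) (fun a b hab => ?_) (fun i => mem_univ _)
        have : (a : ℝ) ≤ b := by exact_mod_cast hab
        simp only [hu]
        nlinarith [hz]

lemma lintegral_shift_bound_pos (f : ℝ → ℝ) (hf : AEMeasurable f volume) {z : ℝ} (hz : 0 < z) :
    ∫⁻ x : ℝ, (‖f (x + z) - f x‖₊ : ℝ≥0∞) ≤ ENNReal.ofReal z * eVariationOn f Set.univ := by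
  set F : ℝ → ℝ≥0∞ := fun x => (‖f (x + z) - f x‖₊ : ℝ≥0∞) with hF
  have hcover : ⋃ k : ℤ, Ioc ((k : ℝ) * z) ((k : ℝ) * z + z) = univ := by
    have h := iUnion_Ioc_zsmul hz
    simpa [zsmul_eq_mul, add_mul, one_mul] using h
  have hd : Pairwise (Function.onFun Disjoint fun k : ℤ => Ioc ((k : ℝ) * z) ((k : ℝ) * z + z)) := by
    intro k l hkl
    simp only [Function.onFun]
    rw [Set.Ioc_disjoint_Ioc]
    rcases lt_or_gt_of_ne hkl with h | h
    · have h1 : (k : ℝ) + 1 ≤ l := by exact_mod_cast h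
      refine le_trans (min_le_left _ _) (le_trans ?_ (le_max_right _ _))
      nlinarith
    · have h1 : (l : ℝ) + 1 ≤ k := by exact_mod_cast h
      refine le_trans (min_le_right _ _) (le_trans ?_ (le_max_left _ _))
      nlinarith
  have hm : ∀ k : ℤ, MeasurableSet (Ioc ((k : ℝ) * z) ((k : ℝ) * z + z)) :=
    fun k => measurableSet_Ioc
  have step1 : ∫⁻ x, F x = ∑' k : ℤ, ∫⁻ x in Ioc ((k : ℝ) * z) ((k : ℝ) * z + z), F x := by
    rw [← lintegral_iUnion hm hd F, hcover, Measure.restrict_univ]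
  have step2 : ∀ k : ℤ, ∫⁻ x in Ioc ((k : ℝ) * z) ((k : ℝ) * z + z), F x
      = ∫⁻ y in Ioc (0 : ℝ) z, (‖f (y + ((k : ℝ) + 1) * z) - f (y + (k : ℝ) * z)‖₊ : ℝ≥0∞) := by
    intro k
    have := (measurePreserving_add_right volume ((k : ℝ) * z)).setLIntegral_comp_preimage_emb
      (measurableEmbedding_addRight _) F (Ioc ((k : ℝ) * z) ((k : ℝ) * z + z))
    rw [← this]
    have hpre : (fun x : ℝ => x + (k : ℝ) * z) ⁻¹' Ioc ((k : ℝ) * z) ((k : ℝ) * z + z)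
        = Ioc (0 : ℝ) z := by
      ext x
      simp only [mem_preimage, mem_Ioc]
      constructor <;> intro h <;> exact ⟨by linarith [h.1], by linarith [h.2]⟩
    rw [hpre]
    refine setLIntegral_congr_fun measurableSet_Ioc (fun y _ => ?_)
    simp only [hF]
    congr 2 <;> ring_nf
  have hmk : ∀ k : ℤ, AEMeasurable
      (fun y : ℝ => (‖f (y + ((k : ℝ) + 1) * z) - f (y + (k : ℝ) * z)‖₊ : ℝ≥0∞))
      (volume.restrict (Ioc (0 : ℝ) z)) := by
    intro k
    have h1 : AEMeasurable (fun y : ℝ => f (y + ((k : ℝ) + 1) * z)) volume :=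
      hf.comp_quasiMeasurePreserving
        (measurePreserving_add_right volume _).quasiMeasurePreserving
    have h2 : AEMeasurable (fun y : ℝ => f (y + (k : ℝ) * z)) volume :=
      hf.comp_quasiMeasurePreserving
        (measurePreserving_add_right volume _).quasiMeasurePreserving
    exact ((h1.sub h2).nnnorm.coe_nnreal_ennreal).restrict
  calc ∫⁻ x, F x
      = ∑' k : ℤ, ∫⁻ y in Ioc (0 : ℝ) z,
          (‖f (y + ((k : ℝ) + 1) * z) - f (y + (k : ℝ) * z)‖₊ : ℝ≥0∞) := by
        rw [step1]; exact tsum_congr step2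
    _ = ∫⁻ y in Ioc (0 : ℝ) z,
          ∑' k : ℤ, (‖f (y + ((k : ℝ) + 1) * z) - f (y + (k : ℝ) * z)‖₊ : ℝ≥0∞) :=
        (lintegral_tsum hmk).symm
    _ ≤ ∫⁻ _ in Ioc (0 : ℝ) z, eVariationOn f Set.univ :=
        lintegral_mono fun y => by
          have := tsum_incr_le f y z hz
          simpa using this
    _ = ENNReal.ofReal z * eVariationOn f Set.univ := by
        rw [setLIntegral_const, Real.volume_Ioc, sub_zero, mul_comm]

lemma lintegral_shift_bound (f : ℝ → ℝ) (hf : AEMeasurable f volume) (z : ℝ) :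
    ∫⁻ x : ℝ, (‖f (x + z) - f x‖₊ : ℝ≥0∞) ≤ ENNReal.ofReal |z| * eVariationOn f Set.univ := by
  rcases lt_trichotomy z 0 with hz | hz | hz
  · have key : ∫⁻ x : ℝ, (‖f (x + z) - f x‖₊ : ℝ≥0∞)
        = ∫⁻ x : ℝ, (‖f (x + -z) - f x‖₊ : ℝ≥0∞) := by
      have := (measurePreserving_add_right volume (-z)).lintegral_comp_emb
        (measurableEmbedding_addRight _) (fun x => (‖f (x + z) - f x‖₊ : ℝ≥0∞))
      rw [← this]
      refine lintegral_congr fun x => ?_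
      have h1 : x + -z + z = x := by ring
      rw [h1, ← neg_sub, nnnorm_neg]
    rw [key, abs_of_neg hz]
    exact lintegral_shift_bound_pos f hf (by linarith)
  · subst hz; simp
  · rw [abs_of_pos hz]; exact lintegral_shift_bound_pos f hf hz

lemma lintegral_shift_le_two (f : ℝ → ℝ) (hf : AEMeasurable f volume) (z : ℝ) :
    ∫⁻ x : ℝ, (‖f (x + z) - f x‖₊ : ℝ≥0∞) ≤ 2 * ∫⁻ x : ℝ, (‖f x‖₊ : ℝ≥0∞) := by
  have h1 : ∫⁻ x : ℝ, (‖f (x + z)‖₊ : ℝ≥0∞) = ∫⁻ x : ℝ, (‖f x‖₊ : ℝ≥0∞) :=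
    (measurePreserving_add_right volume z).lintegral_comp_emb
      (measurableEmbedding_addRight _) (fun x => (‖f x‖₊ : ℝ≥0∞))
  have hfz : AEMeasurable (fun x : ℝ => (‖f (x + z)‖₊ : ℝ≥0∞)) volume :=
    ((hf.comp_quasiMeasurePreserving
      (measurePreserving_add_right volume z).quasiMeasurePreserving).nnnorm).coe_nnreal_ennreal
  calc ∫⁻ x : ℝ, (‖f (x + z) - f x‖₊ : ℝ≥0∞)
      ≤ ∫⁻ x : ℝ, ((‖f (x + z)‖₊ : ℝ≥0∞) + (‖f x‖₊ : ℝ≥0∞)) := by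
        refine lintegral_mono fun x => ?_
        exact ENNReal.coe_le_coe.mpr (nnnorm_sub_le _ _)
    _ = (∫⁻ x : ℝ, (‖f (x + z)‖₊ : ℝ≥0∞)) + ∫⁻ x : ℝ, (‖f x‖₊ : ℝ≥0∞) :=
        lintegral_add_left' hfz _
    _ = 2 * ∫⁻ x : ℝ, (‖f x‖₊ : ℝ≥0∞) := by rw [h1, two_mul]

lemma fin_Ioc01 {r : ℝ} (hr : -1 < r) :
    ∫⁻ z in Ioc (0 : ℝ) 1, ENNReal.ofReal (z ^ r) < ⊤ := by
  have h : IntervalIntegrable (fun x : ℝ => x ^ r) volume 0 1 :=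
    intervalIntegral.intervalIntegrable_rpow' hr
  rw [intervalIntegrable_iff_integrableOn_Ioc_of_le (by norm_num : (0:ℝ) ≤ 1)] at h
  have h2 : ∫⁻ z in Ioc (0 : ℝ) 1, (‖z ^ r‖₊ : ℝ≥0∞) < ⊤ := h.hasFiniteIntegral
  refine lt_of_le_of_lt (lintegral_mono fun z => ?_) h2
  exact Real.ofReal_le_enorm _

lemma fin_Ioi1 {r : ℝ} (hr : r < -1) :
    ∫⁻ z in Ioi (1 : ℝ), ENNReal.ofReal (z ^ r) < ⊤ := by
  have h : IntegrableOn (fun x : ℝ => x ^ r) (Ioi (1 : ℝ)) volume :=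
    integrableOn_Ioi_rpow_of_lt hr one_pos
  have h2 : ∫⁻ z in Ioi (1 : ℝ), (‖z ^ r‖₊ : ℝ≥0∞) < ⊤ := h.hasFiniteIntegral
  refine lt_of_le_of_lt (lintegral_mono fun z => ?_) h2
  exact Real.ofReal_le_enorm _

lemma neg_refl_lintegral (h : ℝ → ℝ≥0∞) (s : Set ℝ) :
    ∫⁻ z in Neg.neg ⁻¹' s, h (-z) = ∫⁻ z in s, h z :=
  (Measure.measurePreserving_neg volume).setLIntegral_comp_preimage_emb
    (MeasurableEquiv.neg ℝ).measurableEmbedding h s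

lemma fin_abs_inner {r : ℝ} (hr : -1 < r) :
    ∫⁻ z in Icc (-1 : ℝ) 1, ENNReal.ofReal (|z| ^ r) < ⊤ := by
  have hsplit : Icc (-1 : ℝ) 1 = Icc (-1 : ℝ) 0 ∪ Ioc (0 : ℝ) 1 :=
    (Icc_union_Ioc_eq_Icc (by norm_num) (by norm_num)).symm
  have hpos : ∫⁻ z in Ioc (0 : ℝ) 1, ENNReal.ofReal (|z| ^ r) < ⊤ := by
    refine lt_of_le_of_lt (le_of_eq ?_) (fin_Ioc01 hr)
    refine setLIntegral_congr_fun measurableSet_Ioc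
      (fun z hz => ?_)
    rw [abs_of_pos hz.1]
  have hIcc01 : ∫⁻ z in Icc (0 : ℝ) 1, ENNReal.ofReal (|z| ^ r) < ⊤ := by
    rw [← Measure.restrict_congr_set Ioc_ae_eq_Icc]
    exact hpos
  have hneg : ∫⁻ z in Icc (-1 : ℝ) 0, ENNReal.ofReal (|z| ^ r) < ⊤ := by
    have hpre : Neg.neg ⁻¹' (Icc (0 : ℝ) 1) = Icc (-1 : ℝ) 0 := by
      ext z; simp only [mem_preimage, mem_Icc]; constructor <;> intro h <;>
        exact ⟨by linarith [h.1, h.2], by linarith [h.1, h.2]⟩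
    have := neg_refl_lintegral (fun z => ENNReal.ofReal (|z| ^ r)) (Icc (0 : ℝ) 1)
    rw [hpre] at this
    simp only [abs_neg] at this
    rw [← this] at hIcc01
    exact hIcc01
  have hdisj : Disjoint (Icc (-1 : ℝ) 0) (Ioc (0 : ℝ) 1) :=
    Set.disjoint_left.mpr fun a ha hb => absurd hb.1 (not_lt.mpr ha.2)
  rw [hsplit, lintegral_union measurableSet_Ioc hdisj]
  exact ENNReal.add_lt_top.mpr ⟨hneg, hpos⟩

lemma fin_abs_outer {r : ℝ} (hr : r < -1) :
    ∫⁻ z in (Icc (-1 : ℝ) 1)ᶜ, ENNReal.ofReal (|z| ^ r) < ⊤ := by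
  have hsplit : (Icc (-1 : ℝ) 1)ᶜ = Iio (-1 : ℝ) ∪ Ioi (1 : ℝ) := by
    ext z
    simp only [mem_compl_iff, mem_Icc, not_and_or, not_le, mem_union, mem_Iio, mem_Ioi]
  have hpos : ∫⁻ z in Ioi (1 : ℝ), ENNReal.ofReal (|z| ^ r) < ⊤ := by
    refine lt_of_le_of_lt (le_of_eq ?_) (fin_Ioi1 hr)
    refine setLIntegral_congr_fun measurableSet_Ioi
      (fun z hz => ?_)
    rw [abs_of_pos (lt_trans one_pos hz)]
  have hneg : ∫⁻ z in Iio (-1 : ℝ), ENNReal.ofReal (|z| ^ r) < ⊤ := by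
    have hpre : Neg.neg ⁻¹' (Ioi (1 : ℝ)) = Iio (-1 : ℝ) := by
      ext z; simp only [mem_preimage, mem_Ioi, mem_Iio]; constructor <;> intro h <;> linarith
    have := neg_refl_lintegral (fun z => ENNReal.ofReal (|z| ^ r)) (Ioi (1 : ℝ))
    rw [hpre] at this
    simp only [abs_neg] at this
    rw [← this] at hpos
    exact hpos
  have hdisj : Disjoint (Iio (-1 : ℝ)) (Ioi (1 : ℝ)) :=
    Set.disjoint_left.mpr fun a ha hb => by
      simp only [mem_Iio] at ha; simp only [mem_Ioi] at hb; linarith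
  rw [hsplit, lintegral_union measurableSet_Ioi hdisj]
  exact ENNReal.add_lt_top.mpr ⟨hneg, hpos⟩

lemma kernel_lt_top {lam : ℝ} (hlam : lam ∈ Set.Ioo (0 : ℝ) 1) (A V : ℝ≥0∞)
    (hA : A ≠ ⊤) (hV : V ≠ ⊤) :
    ∫⁻ z : ℝ, min A (ENNReal.ofReal |z| * V) / ENNReal.ofReal (|z| ^ (1 + lam)) < ⊤ := by
  set g : ℝ → ℝ≥0∞ := fun z => min A (ENNReal.ofReal |z| * V) / ENNReal.ofReal (|z| ^ (1 + lam))
    with hg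
  rw [← lintegral_add_compl g (measurableSet_Icc (a := (-1 : ℝ)) (b := (1 : ℝ)))]
  have habs : ∀ z : ℝ, z ≠ 0 → (ENNReal.ofReal (|z| ^ (1 + lam)))⁻¹
      = ENNReal.ofReal (|z| ^ (-(1 + lam))) := by
    intro z hz
    have h0 : (0 : ℝ) < |z| := abs_pos.mpr hz
    rw [Real.rpow_neg (abs_nonneg z), ENNReal.ofReal_inv_of_pos (Real.rpow_pos_of_pos h0 _)]
  have hinner : ∫⁻ z in Icc (-1 : ℝ) 1, g z < ⊤ := by
    have hbound : ∀ᵐ z ∂(volume.restrict (Icc (-1 : ℝ) 1)),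
        g z ≤ V * ENNReal.ofReal (|z| ^ (-lam)) := by
      refine (ae_restrict_of_ae ?_)
      have hz0 : ∀ᵐ z : ℝ ∂volume, z ≠ 0 :=
        compl_mem_ae_iff.mpr (measure_singleton 0)
      filter_upwards [hz0] with z hz
      have h0 : (0 : ℝ) < |z| := abs_pos.mpr hz
      calc g z ≤ (ENNReal.ofReal |z| * V) / ENNReal.ofReal (|z| ^ (1 + lam)) :=
            ENNReal.div_le_div_right (min_le_right _ _) _
        _ = V * ENNReal.ofReal (|z| ^ (-lam)) := by
            rw [div_eq_mul_inv, habs z hz, mul_comm (ENNReal.ofReal |z|) V, mul_assoc,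
              ← ENNReal.ofReal_mul (abs_nonneg z)]
            congr 2
            nth_rewrite 1 [← Real.rpow_one |z|]
            rw [← Real.rpow_add h0]
            congr 1
            ring
    calc ∫⁻ z in Icc (-1 : ℝ) 1, g z
        ≤ ∫⁻ z in Icc (-1 : ℝ) 1, V * ENNReal.ofReal (|z| ^ (-lam)) := lintegral_mono_ae hbound
      _ = V * ∫⁻ z in Icc (-1 : ℝ) 1, ENNReal.ofReal (|z| ^ (-lam)) :=
          lintegral_const_mul' V _ hV
      _ < ⊤ := ENNReal.mul_lt_top hV.lt_top (fin_abs_inner (by linarith [hlam.2]))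
  have houter : ∫⁻ z in (Icc (-1 : ℝ) 1)ᶜ, g z < ⊤ := by
    have hbound : ∀ᵐ z ∂(volume.restrict ((Icc (-1 : ℝ) 1)ᶜ)),
        g z ≤ A * ENNReal.ofReal (|z| ^ (-(1 + lam))) := by
      refine ae_restrict_of_ae ?_
      have hz0 : ∀ᵐ z : ℝ ∂volume, z ≠ 0 :=
        compl_mem_ae_iff.mpr (measure_singleton 0)
      filter_upwards [hz0] with z hz
      calc g z ≤ A / ENNReal.ofReal (|z| ^ (1 + lam)) :=
            ENNReal.div_le_div_right (min_le_left _ _) _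
        _ = A * ENNReal.ofReal (|z| ^ (-(1 + lam))) := by
            rw [div_eq_mul_inv, habs z hz]
    calc ∫⁻ z in (Icc (-1 : ℝ) 1)ᶜ, g z
        ≤ ∫⁻ z in (Icc (-1 : ℝ) 1)ᶜ, A * ENNReal.ofReal (|z| ^ (-(1 + lam))) :=
          lintegral_mono_ae hbound
      _ = A * ∫⁻ z in (Icc (-1 : ℝ) 1)ᶜ, ENNReal.ofReal (|z| ^ (-(1 + lam))) :=
          lintegral_const_mul' A _ hA
      _ < ⊤ := ENNReal.mul_lt_top hA.lt_top (fin_abs_outer (by linarith [hlam.1]))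
  exact ENNReal.add_lt_top.mpr ⟨hinner, houter⟩

lemma key_z {lam : ℝ} (hlam : lam ∈ Set.Ioo (0 : ℝ) 1) (f : ℝ → ℝ)
    (hf1 : Integrable f) (hfbv : eVariationOn f Set.univ ≠ ⊤) :
    ∫⁻ z : ℝ, (∫⁻ x : ℝ, (‖f (x + z) - f x‖₊ : ℝ≥0∞)) / ENNReal.ofReal (|z| ^ (1 + lam)) < ⊤ := by
  have hA : (2 * ∫⁻ x : ℝ, (‖f x‖₊ : ℝ≥0∞)) ≠ ⊤ :=
    (ENNReal.mul_lt_top (by norm_num) hf1.2).ne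
  refine lt_of_le_of_lt (lintegral_mono fun z => ?_)
    (kernel_lt_top hlam _ _ hA hfbv)
  exact ENNReal.div_le_div_right
    (le_min (lintegral_shift_le_two f hf1.aemeasurable z)
      (lintegral_shift_bound f hf1.aemeasurable z)) _

lemma ennnorm_div_le (u w : ℝ) (hw : 0 ≤ w) :
    (‖u / w‖₊ : ℝ≥0∞) ≤ (‖u‖₊ : ℝ≥0∞) / ENNReal.ofReal w := by
  rcases eq_or_lt_of_le hw with h0 | hpos
  · simp [← h0]
  · rw [nnnorm_div, ENNReal.coe_div (by simpa using ne_of_gt hpos)]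
    exact ENNReal.div_le_div_left (Real.ofReal_le_enorm w) _

lemma restrict_compl_zero : (volume : Measure ℝ).restrict ({0}ᶜ : Set ℝ) = volume := by
  rw [Measure.restrict_congr_set (ae_eq_univ.mpr (by rw [compl_compl]; exact measure_singleton 0)),
    Measure.restrict_univ]

lemma fracLap_eq (clam lam : ℝ) (g : ℝ → ℝ) (x : ℝ) :
    fracLap clam lam g x = clam * ∫ z : ℝ, (g (x + z) - g x) / |z| ^ (1 + lam) := by
  rw [fracLap, restrict_compl_zero]

lemma half {lam : ℝ} (hlam : lam ∈ Set.Ioo (0 : ℝ) 1) {clam : ℝ}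
    (φ ψ : ℝ → ℝ) (hφ1 : Integrable φ) (hφbv : eVariationOn φ Set.univ ≠ ⊤)
    (hψ1 : Integrable ψ) (hψbv : eVariationOn ψ Set.univ ≠ ⊤) :
    Integrable (fun x : ℝ => ψ x * fracLap clam lam φ x) ∧
    ∫ x : ℝ, ψ x * fracLap clam lam φ x
      = clam * ∫ z : ℝ, ((∫ x : ℝ, ψ x * φ (x + z)) - ∫ x : ℝ, ψ x * φ x) / |z| ^ (1 + lam) := by
  obtain ⟨M, hM0, hM⟩ := bv_bounded ψ hψbv
  set Φ : ℝ → ℝ := (hφ1.1.mk φ) with hΦdef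
  have hΦm : StronglyMeasurable Φ := hφ1.1.stronglyMeasurable_mk
  have hΦae : φ =ᵐ[volume] Φ := hφ1.1.ae_eq_mk
  -- quasi-measure-preserving addition on the product
  have qmpAdd : Measure.QuasiMeasurePreserving (fun p : ℝ × ℝ => p.1 + p.2)
      ((volume : Measure ℝ).prod volume) volume := by
    have h1 := (measurePreserving_prod_add (volume : Measure ℝ) volume).quasiMeasurePreserving
    exact Measure.quasiMeasurePreserving_snd.comp h1
  have hφprod : (fun p : ℝ × ℝ => φ (p.1 + p.2)) =ᵐ[(volume : Measure ℝ).prod volume]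
      (fun p : ℝ × ℝ => Φ (p.1 + p.2)) := qmpAdd.ae_eq_comp hΦae
  have hφfst : (fun p : ℝ × ℝ => φ p.1) =ᵐ[(volume : Measure ℝ).prod volume]
      (fun p : ℝ × ℝ => Φ p.1) := Measure.quasiMeasurePreserving_fst.ae_eq_comp hΦae
  have hφshift : ∀ z : ℝ, (fun x : ℝ => φ (x + z)) =ᵐ[volume] (fun x : ℝ => Φ (x + z)) :=
    fun z => (measurePreserving_add_right volume z).quasiMeasurePreserving.ae_eq_comp hΦae
  -- the ENNReal kernel
  set K : ℝ × ℝ → ℝ≥0∞ :=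
    fun p => (‖Φ (p.1 + p.2) - Φ p.1‖₊ : ℝ≥0∞) / ENNReal.ofReal (|p.2| ^ (1 + lam)) with hKdef
  have hKm : Measurable K := by
    have h1 : Measurable fun p : ℝ × ℝ => Φ (p.1 + p.2) :=
      hΦm.measurable.comp measurable_add
    have h2 : Measurable fun p : ℝ × ℝ => Φ p.1 := hΦm.measurable.comp measurable_fst
    have h3 : Measurable fun p : ℝ × ℝ => ENNReal.ofReal (|p.2| ^ (1 + lam)) :=
      (measurable_snd.abs.pow_const _).ennreal_ofReal
    exact ((h1.sub h2).nnnorm.coe_nnreal_ennreal).div h3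
  -- the diagonal congruence for each z
  have hinner_congr : ∀ z : ℝ,
      ∫⁻ x : ℝ, (‖Φ (x + z) - Φ x‖₊ : ℝ≥0∞) = ∫⁻ x : ℝ, (‖φ (x + z) - φ x‖₊ : ℝ≥0∞) := by
    intro z
    refine lintegral_congr_ae ?_
    filter_upwards [hφshift z, hΦae] with x h1 h2
    rw [h1, h2]
  -- finiteness of the double integral
  have hKfin : ∫⁻ p : ℝ × ℝ, K p ∂((volume : Measure ℝ).prod volume) < ⊤ := by
    rw [lintegral_prod_symm K hKm.aemeasurable]
    have : ∀ z : ℝ, ∫⁻ x : ℝ, K (x, z)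
        = (∫⁻ x : ℝ, (‖φ (x + z) - φ x‖₊ : ℝ≥0∞)) / ENNReal.ofReal (|z| ^ (1 + lam)) := by
      intro z
      rw [← hinner_congr z]
      simp only [hKdef, div_eq_mul_inv]
      exact lintegral_mul_const'' _
        (((hΦm.measurable.comp (measurable_add_const z)).sub hΦm.measurable).nnnorm.coe_nnreal_ennreal).aemeasurable
    calc ∫⁻ z : ℝ, ∫⁻ x : ℝ, K (x, z) = ∫⁻ z : ℝ,
          (∫⁻ x : ℝ, (‖φ (x + z) - φ x‖₊ : ℝ≥0∞)) / ENNReal.ofReal (|z| ^ (1 + lam)) :=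
        lintegral_congr this
      _ < ⊤ := key_z hlam φ hφ1 hφbv
  -- finiteness of iterated integral in the other order
  have hGfin : ∫⁻ x : ℝ, ∫⁻ z : ℝ, K (x, z) < ⊤ := by
    rw [← lintegral_prod K hKm.aemeasurable]; exact hKfin
  have hGm : Measurable fun x : ℝ => ∫⁻ z : ℝ, K (x, z) := hKm.lintegral_prod_right'
  have hGa : ∀ᵐ x : ℝ, ∫⁻ z : ℝ, K (x, z) < ⊤ := ae_lt_top hGm hGfin.ne
  -- a.e. identification of fracLap with the measurable version
  have haez : ∀ᵐ x : ℝ, ∀ᵐ z : ℝ, φ (x + z) = Φ (x + z) :=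
    Measure.ae_ae_of_ae_prod hφprod
  set FΦ : ℝ → ℝ := fun x => ∫ z : ℝ, (Φ (x + z) - Φ x) / |z| ^ (1 + lam) with hFΦdef
  have hfrac_ae : (fun x : ℝ => fracLap clam lam φ x) =ᵐ[volume]
      (fun x : ℝ => clam * FΦ x) := by
    filter_upwards [haez, hΦae] with x hx hx0
    rw [fracLap_eq]
    congr 1
    refine integral_congr_ae ?_
    filter_upwards [hx] with z hz
    rw [hz, hx0]
  have hwm : Measurable fun p : ℝ × ℝ => |p.2| ^ (1 + lam) :=
    measurable_snd.abs.pow_const _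
  have hnum_m : Measurable fun p : ℝ × ℝ => Φ (p.1 + p.2) - Φ p.1 :=
    (hΦm.measurable.comp measurable_add).sub (hΦm.measurable.comp measurable_fst)
  have hFΦsm : StronglyMeasurable FΦ := by
    have : StronglyMeasurable fun p : ℝ × ℝ => (Φ (p.1 + p.2) - Φ p.1) / |p.2| ^ (1 + lam) :=
      (hnum_m.div hwm).stronglyMeasurable
    exact this.integral_prod_right'
  have hfrac_aesm : AEStronglyMeasurable (fun x : ℝ => fracLap clam lam φ x) volume :=
    ((stronglyMeasurable_const.mul hFΦsm).aestronglyMeasurable).congr hfrac_ae.symm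
  -- pointwise bound for the inner Bochner integral
  have hFΦbd : ∀ x : ℝ, (‖FΦ x‖₊ : ℝ≥0∞) ≤ ∫⁻ z : ℝ, K (x, z) := by
    intro x
    refine le_trans (enorm_integral_le_lintegral_enorm _) (lintegral_mono fun z => ?_)
    exact ennnorm_div_le _ _ (Real.rpow_nonneg (abs_nonneg z) _)
  -- Integrability of ψ * fracLap φ
  have hψM : ∀ x : ℝ, (‖ψ x‖₊ : ℝ≥0∞) ≤ ENNReal.ofReal M := by
    intro x
    rw [← Real.enorm_eq_ofReal hM0]
    have h : ‖ψ x‖₊ ≤ ‖M‖₊ := by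
      rw [← NNReal.coe_le_coe, coe_nnnorm, coe_nnnorm, Real.norm_eq_abs, Real.norm_eq_abs,
        abs_of_nonneg hM0]
      exact hM x
    exact_mod_cast h
  have hint1 : Integrable (fun x : ℝ => ψ x * fracLap clam lam φ x) volume := by
    refine ⟨hψ1.1.mul hfrac_aesm, ?_⟩
    have hb : ∀ᵐ x : ℝ ∂volume, (‖ψ x * fracLap clam lam φ x‖₊ : ℝ≥0∞)
        ≤ (ENNReal.ofReal M * ‖clam‖₊) * ∫⁻ z : ℝ, K (x, z) := by
      filter_upwards [hfrac_ae] with x hx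
      rw [hx]
      calc (‖ψ x * (clam * FΦ x)‖₊ : ℝ≥0∞)
          = (‖ψ x‖₊ : ℝ≥0∞) * ((‖clam‖₊ : ℝ≥0∞) * (‖FΦ x‖₊ : ℝ≥0∞)) := by
            rw [nnnorm_mul, nnnorm_mul]; push_cast; ring
        _ ≤ ENNReal.ofReal M * ((‖clam‖₊ : ℝ≥0∞) * ∫⁻ z : ℝ, K (x, z)) := by
            exact mul_le_mul' (hψM x) (mul_le_mul' le_rfl (hFΦbd x))
        _ = (ENNReal.ofReal M * ‖clam‖₊) * ∫⁻ z : ℝ, K (x, z) := by ring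
    calc ∫⁻ x : ℝ, (‖ψ x * fracLap clam lam φ x‖₊ : ℝ≥0∞)
        ≤ ∫⁻ x : ℝ, (ENNReal.ofReal M * ‖clam‖₊) * ∫⁻ z : ℝ, K (x, z) := lintegral_mono_ae hb
      _ = (ENNReal.ofReal M * ‖clam‖₊) * ∫⁻ x : ℝ, ∫⁻ z : ℝ, K (x, z) :=
          lintegral_const_mul' _ _ (by finiteness)
      _ < ⊤ := ENNReal.mul_lt_top (by finiteness) hGfin
  refine ⟨hint1, ?_⟩
  -- the product function
  set Ψ : ℝ → ℝ := hψ1.1.mk ψ with hΨdef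
  have hΨm : StronglyMeasurable Ψ := hψ1.1.stronglyMeasurable_mk
  have hψfst : (fun p : ℝ × ℝ => ψ p.1) =ᵐ[(volume : Measure ℝ).prod volume]
      (fun p : ℝ × ℝ => Ψ p.1) := Measure.quasiMeasurePreserving_fst.ae_eq_comp hψ1.1.ae_eq_mk
  set F : ℝ × ℝ → ℝ := fun p => ψ p.1 * ((φ (p.1 + p.2) - φ p.1) / |p.2| ^ (1 + lam)) with hFdef
  set Fm : ℝ × ℝ → ℝ := fun p => Ψ p.1 * ((Φ (p.1 + p.2) - Φ p.1) / |p.2| ^ (1 + lam)) with hFmdef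
  have hFae : F =ᵐ[(volume : Measure ℝ).prod volume] Fm := by
    filter_upwards [hψfst, hφprod, hφfst] with p h1 h2 h3
    simp only [hFdef, hFmdef, h1, h2, h3]
  have hFm_m : Measurable Fm :=
    (hΨm.measurable.comp measurable_fst).mul (hnum_m.div hwm)
  have hF_aesm : AEStronglyMeasurable F ((volume : Measure ℝ).prod volume) :=
    hFm_m.stronglyMeasurable.aestronglyMeasurable.congr hFae.symm
  have hFint : Integrable F ((volume : Measure ℝ).prod volume) := by
    refine ⟨hF_aesm, ?_⟩
    have hb : ∀ᵐ p : ℝ × ℝ ∂(volume : Measure ℝ).prod volume,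
        (‖F p‖₊ : ℝ≥0∞) ≤ ENNReal.ofReal M * K p := by
      filter_upwards [hφprod, hφfst] with p h1 h2
      calc (‖F p‖₊ : ℝ≥0∞)
          = (‖ψ p.1‖₊ : ℝ≥0∞) * (‖(φ (p.1 + p.2) - φ p.1) / |p.2| ^ (1 + lam)‖₊ : ℝ≥0∞) := by
            rw [hFdef, nnnorm_mul]; push_cast; ring
        _ ≤ ENNReal.ofReal M * K p := by
            refine mul_le_mul' (hψM p.1) ?_
            rw [h1, h2]
            exact ennnorm_div_le _ _ (Real.rpow_nonneg (abs_nonneg _) _)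
    calc ∫⁻ p : ℝ × ℝ, (‖F p‖₊ : ℝ≥0∞) ∂(volume : Measure ℝ).prod volume
        ≤ ∫⁻ p : ℝ × ℝ, ENNReal.ofReal M * K p ∂(volume : Measure ℝ).prod volume :=
          lintegral_mono_ae hb
      _ = ENNReal.ofReal M * ∫⁻ p : ℝ × ℝ, K p ∂(volume : Measure ℝ).prod volume :=
          lintegral_const_mul' _ _ (by finiteness)
      _ < ⊤ := ENNReal.mul_lt_top (by finiteness) hKfin
  -- rewrite the left-hand side and swap
  have hstep1 : ∀ x : ℝ, ψ x * fracLap clam lam φ x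
      = clam * ∫ z : ℝ, F (x, z) := by
    intro x
    rw [fracLap_eq]
    have : ψ x * ∫ z : ℝ, (φ (x + z) - φ x) / |z| ^ (1 + lam) = ∫ z : ℝ, F (x, z) :=
      (integral_const_mul _ _).symm
    rw [mul_left_comm, this]
  have hswap : ∫ x : ℝ, ∫ z : ℝ, F (x, z) = ∫ z : ℝ, ∫ x : ℝ, F (x, z) :=
    integral_integral_swap (f := fun x z => F (x, z)) hFint
  -- evaluate the inner integral for each z
  have hinner : ∀ z : ℝ, ∫ x : ℝ, F (x, z)
      = ((∫ x : ℝ, ψ x * φ (x + z)) - ∫ x : ℝ, ψ x * φ x) / |z| ^ (1 + lam) := by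
    intro z
    have hMnorm : ∃ C, ∀ x : ℝ, ‖ψ x‖ ≤ C := ⟨M, fun x => by rw [Real.norm_eq_abs]; exact hM x⟩
    have h1 : Integrable (fun x : ℝ => ψ x * φ (x + z)) volume :=
      (hφ1.comp_add_right z).bdd_mul hψ1.1 (Filter.Eventually.of_forall hMnorm.choose_spec)
    have h2 : Integrable (fun x : ℝ => ψ x * φ x) volume := hφ1.bdd_mul hψ1.1 (Filter.Eventually.of_forall hMnorm.choose_spec)
    calc ∫ x : ℝ, F (x, z)
        = ∫ x : ℝ, (ψ x * φ (x + z) - ψ x * φ x) / |z| ^ (1 + lam) := by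
          refine integral_congr_ae (Filter.Eventually.of_forall fun x => ?_)
          simp only [hFdef]; ring
      _ = (∫ x : ℝ, (ψ x * φ (x + z) - ψ x * φ x)) / |z| ^ (1 + lam) := integral_div _ _
      _ = ((∫ x : ℝ, ψ x * φ (x + z)) - ∫ x : ℝ, ψ x * φ x) / |z| ^ (1 + lam) := by
          rw [integral_sub h1 h2]
  calc ∫ x : ℝ, ψ x * fracLap clam lam φ x
      = ∫ x : ℝ, clam * ∫ z : ℝ, F (x, z) := by
        exact integral_congr_ae (Filter.Eventually.of_forall hstep1)
    _ = clam * ∫ x : ℝ, ∫ z : ℝ, F (x, z) := integral_const_mul _ _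
    _ = clam * ∫ z : ℝ, ∫ x : ℝ, F (x, z) := by rw [hswap]
    _ = clam * ∫ z : ℝ, ((∫ x : ℝ, ψ x * φ (x + z)) - ∫ x : ℝ, ψ x * φ x) / |z| ^ (1 + lam) := by
        rw [integral_congr_ae (Filter.Eventually.of_forall hinner)]

/-- For all `φ, ψ ∈ L¹(ℝ) ∩ BV(ℝ)`, the integrals `∫ ψ L[φ]` and `∫ φ L[ψ]` converge
absolutely and are equal. -/
theorem fracLap_self_adjoint (lam : ℝ) (hlam : lam ∈ Set.Ioo (0 : ℝ) 1)
    (clam : ℝ) (hclam : 0 < clam)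
    (φ ψ : ℝ → ℝ)
    (hφ1 : Integrable φ) (hφbv : eVariationOn φ Set.univ ≠ ⊤)
    (hψ1 : Integrable ψ) (hψbv : eVariationOn ψ Set.univ ≠ ⊤) :
    Integrable (fun x : ℝ => ψ x * fracLap clam lam φ x) ∧
    Integrable (fun x : ℝ => φ x * fracLap clam lam ψ x) ∧
    ∫ x : ℝ, ψ x * fracLap clam lam φ x = ∫ x : ℝ, φ x * fracLap clam lam ψ x := by
  obtain ⟨hint1, heq1⟩ := half hlam (clam := clam) φ ψ hφ1 hφbv hψ1 hψbv
  obtain ⟨hint2, heq2⟩ := half hlam (clam := clam) ψ φ hψ1 hψbv hφ1 hφbv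
  refine ⟨hint1, hint2, ?_⟩
  rw [heq1, heq2]
  congr 1
  set h : ℝ → ℝ := fun z => ((∫ x : ℝ, ψ x * φ (x + z)) - ∫ x : ℝ, ψ x * φ x) / |z| ^ (1 + lam)
    with hhdef
  have key : ∀ z : ℝ, ((∫ x : ℝ, φ x * ψ (x + z)) - ∫ x : ℝ, φ x * ψ x) / |z| ^ (1 + lam)
      = h (-z) := by
    intro z
    have e1 : ∫ x : ℝ, φ x * ψ (x + z) = ∫ x : ℝ, ψ x * φ (x + -z) := by
      have h2 := integral_add_right_eq_self (μ := volume) (fun y : ℝ => ψ y * φ (y + -z)) z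
      rw [← h2]
      refine integral_congr_ae (Filter.Eventually.of_forall fun x => ?_)
      have hx : x + z + -z = x := by ring
      simp only [hx, mul_comm]
    have e2 : ∫ x : ℝ, φ x * ψ x = ∫ x : ℝ, ψ x * φ x :=
      integral_congr_ae (Filter.Eventually.of_forall fun x => mul_comm _ _)
    rw [e1, e2, hhdef]
    simp only [abs_neg]
  calc ∫ z : ℝ, ((∫ x : ℝ, ψ x * φ (x + z)) - ∫ x : ℝ, ψ x * φ x) / |z| ^ (1 + lam)
      = ∫ z : ℝ, h z := rfl
    _ = ∫ z : ℝ, h (-z) := (integral_neg_eq_self h volume).symm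
    _ = ∫ z : ℝ, ((∫ x : ℝ, φ x * ψ (x + z)) - ∫ x : ℝ, φ x * ψ x) / |z| ^ (1 + lam) := by
        refine integral_congr_ae (Filter.Eventually.of_forall fun z => ?_)
        exact (key z).symm
end

section
/- For every φ ∈ L¹(ℝ) ∩ BV(ℝ), the double integral ∫_ℝ ∫_ℝ (φ(z) − φ(x))²/|z−x|^{1+λ} dz dx is finite and ∫_ℝ φ(x) L[φ](x) dx = −(c_λ/2) ∫_ℝ ∫_ℝ (φ(z) − φ(x))²/|z−x|^{1+λ} dz dx. -/
open MeasureTheory Filter Set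
open scoped ENNReal

lemma sum_Icc_edist_le (φ : ℝ → ℝ) (x z : ℝ) (hz : 0 < z) (a b : ℤ) :
    ∑ n ∈ Finset.Icc a b, edist (φ (x + (n + 1) * z)) (φ (x + n * z)) ≤
      eVariationOn φ Set.univ := by
  set N : ℕ := (b + 1 - a).toNat with hN
  have hmap : Finset.Icc a b =
      (Finset.range N).map ⟨fun i : ℕ => a + i, fun i j (h : a + (i:ℤ) = a + (j:ℤ)) => by omega⟩ := by
    ext n
    simp only [Finset.mem_Icc, Finset.mem_map, Finset.mem_range, Function.Embedding.coeFn_mk]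
    constructor
    · rintro ⟨h1, h2⟩; exact ⟨(n - a).toNat, by omega, by show a + ((n - a).toNat : ℤ) = n; omega⟩
    · rintro ⟨i, hi, rfl⟩; show a ≤ a + (i:ℤ) ∧ a + (i:ℤ) ≤ b; omega
  rw [hmap, Finset.sum_map]
  have hu : Monotone (fun i : ℕ => x + (a + i) * z) := by
    intro i j hij
    have h1 : (a + (i:ℤ) : ℝ) ≤ (a + (j:ℤ) : ℝ) := by exact_mod_cast by omega
    have := mul_le_mul_of_nonneg_right h1 hz.le
    simp only []
    push_cast at this ⊢
    linarith
  have := eVariationOn.sum_le (f := φ) (n := N) hu (fun i => Set.mem_univ _)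
  refine le_trans (le_of_eq ?_) this
  apply Finset.sum_congr rfl
  intro i _
  show edist (φ (x + (((a + (i:ℤ) : ℤ) : ℝ) + 1) * z)) (φ (x + ((a + (i:ℤ) : ℤ) : ℝ) * z)) =
    edist (φ (x + ((a:ℝ) + ((i+1 : ℕ) : ℝ)) * z)) (φ (x + ((a:ℝ) + ((i:ℕ):ℝ)) * z))
  congr 2 <;> push_cast <;> ring

lemma tsum_edist_le (φ : ℝ → ℝ) (x z : ℝ) (hz : 0 < z) :
    ∑' n : ℤ, edist (φ (x + (n + 1) * z)) (φ (x + n * z)) ≤ eVariationOn φ Set.univ := by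
  rw [ENNReal.tsum_eq_iSup_sum]
  refine iSup_le fun S => ?_
  rcases S.eq_empty_or_nonempty with rfl | hS
  · simp
  · refine le_trans (Finset.sum_le_sum_of_subset ?_) (sum_Icc_edist_le φ x z hz (S.min' hS) (S.max' hS))
    intro n hn
    exact Finset.mem_Icc.2 ⟨S.min'_le n hn, S.le_max' n hn⟩

lemma lintegral_translate_le_pos (φ : ℝ → ℝ) (hm : Measurable φ) {z : ℝ} (hz : 0 < z) :
    ∫⁻ x : ℝ, ENNReal.ofReal |φ (x + z) - φ x| ≤
      ENNReal.ofReal z * eVariationOn φ Set.univ := by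
  set f : ℝ → ℝ≥0∞ := fun x => ENNReal.ofReal |φ (x + z) - φ x| with hf
  have hfm : Measurable f :=
    ENNReal.measurable_ofReal.comp (((hm.comp (measurable_id.add_const z)).sub hm).abs)
  set S : ℤ → Set ℝ := fun n => Ico ((n : ℝ) * z) ((n : ℝ) * z + z) with hS
  have hU : (⋃ n : ℤ, S n) = Set.univ := by
    ext x
    simp only [hS, mem_iUnion, mem_Ico, mem_univ, iff_true]
    refine ⟨⌊x / z⌋, ?_, ?_⟩
    · exact (le_div_iff₀ hz).mp (Int.floor_le (x / z))
    · have h2 : x / z < ⌊x / z⌋ + 1 := Int.lt_floor_add_one (x / z)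
      have := (div_lt_iff₀ hz).mp h2
      linarith
  have hd : Pairwise (Function.onFun Disjoint S) := by
    intro i j hij
    rcases lt_or_gt_of_ne hij with h | h
    · apply Set.disjoint_left.2
      intro x hx1 hx2
      have h1 : ((i : ℝ) + 1) ≤ (j : ℝ) := by exact_mod_cast h
      have := mul_le_mul_of_nonneg_right h1 hz.le
      simp only [hS, mem_Ico] at hx1 hx2
      nlinarith [hx1.2, hx2.1]
    · apply Set.disjoint_right.2
      intro x hx1 hx2
      have h1 : ((j : ℝ) + 1) ≤ (i : ℝ) := by exact_mod_cast h
      have := mul_le_mul_of_nonneg_right h1 hz.le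
      simp only [hS, mem_Ico] at hx1 hx2
      nlinarith [hx1.2, hx2.1]
  have hsplit : ∫⁻ x : ℝ, f x = ∑' n : ℤ, ∫⁻ x in S n, f x := by
    conv_lhs => rw [← Measure.restrict_univ (μ := volume), ← hU]
    exact lintegral_iUnion (fun n => measurableSet_Ico) hd f
  have htrans : ∀ n : ℤ, ∫⁻ x in S n, f x = ∫⁻ x in Ico (0:ℝ) z, f (x + n * z) := by
    intro n
    have := (measurePreserving_add_right volume ((n:ℝ)*z)).setLIntegral_comp_preimage_emb
      (measurableEmbedding_addRight ((n:ℝ)*z)) f (S n)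
    rw [← this]
    congr 1
    simp only [hS, preimage_add_const_Ico]
    congr 1 <;> ring
  have hswap : ∑' n : ℤ, ∫⁻ x in Ico (0:ℝ) z, f (x + n * z) =
      ∫⁻ x in Ico (0:ℝ) z, ∑' n : ℤ, f (x + n * z) := by
    rw [lintegral_tsum]
    intro n
    exact (hfm.comp (measurable_id.add_const _)).aemeasurable
  have hptwise : ∀ x : ℝ, ∑' n : ℤ, f (x + n * z) ≤ eVariationOn φ Set.univ := by
    intro x
    refine le_trans (le_of_eq ?_) (tsum_edist_le φ x z hz)
    apply tsum_congr
    intro n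
    simp only [hf]
    rw [edist_dist, Real.dist_eq]
    congr 2
    ring
  calc ∫⁻ x : ℝ, f x = ∫⁻ x in Ico (0:ℝ) z, ∑' n : ℤ, f (x + n * z) := by
        rw [hsplit]; simp_rw [htrans]; exact hswap
    _ ≤ ∫⁻ _x in Ico (0:ℝ) z, eVariationOn φ Set.univ :=
        lintegral_mono_ae (Filter.Eventually.of_forall fun x => hptwise x)
    _ = ENNReal.ofReal z * eVariationOn φ Set.univ := by
        rw [setLIntegral_const, Real.volume_Ico, mul_comm]
        simp

lemma lintegral_translate_le (φ : ℝ → ℝ) (hm : Measurable φ) (z : ℝ) :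
    ∫⁻ x : ℝ, ENNReal.ofReal |φ (x + z) - φ x| ≤
      ENNReal.ofReal |z| * eVariationOn φ Set.univ := by
  rcases lt_trichotomy z 0 with hz | rfl | hz
  · have key := lintegral_translate_le_pos φ hm (z := -z) (by linarith)
    have : ∫⁻ x : ℝ, ENNReal.ofReal |φ (x + z) - φ x| =
        ∫⁻ x : ℝ, ENNReal.ofReal |φ (x + (-z)) - φ x| := by
      rw [← lintegral_add_right_eq_self (fun x => ENNReal.ofReal |φ (x + z) - φ x|) (-z)]
      apply lintegral_congr
      intro x
      rw [abs_sub_comm]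
      congr 2
      ring_nf
    rw [this, abs_of_neg hz]
    exact key
  · simp
  · rw [abs_of_pos hz]; exact lintegral_translate_le_pos φ hm hz

lemma integrableOn_abs_rpow_Ioo01 {r : ℝ} (hr : (-1:ℝ) < r) :
    IntegrableOn (fun x : ℝ => |x| ^ r) (Ioo (0:ℝ) 1) := by
  refine ((intervalIntegral.integrableOn_Ioo_rpow_iff one_pos).2 hr).congr_fun ?_ measurableSet_Ioo
  intro x hx
  show x ^ r = |x| ^ r
  rw [abs_of_pos hx.1]

lemma integrableOn_abs_rpow_Ioi1 {r : ℝ} (hr : r < (-1:ℝ)) :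
    IntegrableOn (fun x : ℝ => |x| ^ r) (Ioi (1:ℝ)) := by
  refine ((integrableOn_Ioi_rpow_iff one_pos).2 hr).congr_fun ?_ measurableSet_Ioi
  intro x hx
  show x ^ r = |x| ^ r
  rw [abs_of_pos (lt_trans one_pos hx)]

lemma integrableOn_abs_rpow_of_neg (r : ℝ) {s : Set ℝ}
    (h : IntegrableOn (fun x : ℝ => |x| ^ r) (Neg.neg ⁻¹' s)) :
    IntegrableOn (fun x : ℝ => |x| ^ r) s := by
  have hmp : MeasurePreserving (Neg.neg : ℝ → ℝ) volume volume :=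
    Measure.measurePreserving_neg volume
  have hme : MeasurableEmbedding (Neg.neg : ℝ → ℝ) :=
    (MeasurableEquiv.neg ℝ).measurableEmbedding
  rw [← hmp.integrableOn_comp_preimage hme]
  have hcomp : (fun x : ℝ => |x| ^ r) ∘ Neg.neg = fun x : ℝ => |x| ^ r :=
    funext fun x => by simp
  rwa [hcomp]

lemma integrableOn_abs_rpow_Icc {r : ℝ} (hr : (-1:ℝ) < r) :
    IntegrableOn (fun x : ℝ => |x| ^ r) (Icc (-1:ℝ) 1) := by
  have hneg : IntegrableOn (fun x : ℝ => |x| ^ r) (Ioo (-1:ℝ) 0) := by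
    apply integrableOn_abs_rpow_of_neg
    have : (Neg.neg : ℝ → ℝ) ⁻¹' Ioo (-1:ℝ) 0 = Ioo (0:ℝ) 1 := by
      ext x; simp only [mem_preimage, mem_Ioo]; constructor <;> intro h <;>
        exact ⟨by linarith [h.1, h.2], by linarith [h.1, h.2]⟩
    rw [this]
    exact integrableOn_abs_rpow_Ioo01 hr
  have hnull : IntegrableOn (fun x : ℝ => |x| ^ r) ({-1, 0, 1} : Set ℝ) := by
    have h0 : (volume.restrict ({-1, 0, 1} : Set ℝ)) = 0 := by
      rw [Measure.restrict_eq_zero]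
      have : (({-1, 0, 1} : Set ℝ)).Finite := Set.toFinite _
      exact this.measure_zero volume
    rw [IntegrableOn, h0]
    exact integrable_zero_measure
  have hsub : Icc (-1:ℝ) 1 ⊆ Ioo (-1:ℝ) 0 ∪ (Ioo (0:ℝ) 1 ∪ ({-1, 0, 1} : Set ℝ)) := by
    intro x hx
    simp only [mem_Icc] at hx
    rcases lt_trichotomy x 0 with h | rfl | h
    · rcases eq_or_lt_of_le hx.1 with h1 | h1
      · right; right; left; exact h1.symm
      · left; exact ⟨h1, h⟩
    · right; right; right; left; rfl
    · rcases eq_or_lt_of_le hx.2 with h1 | h1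
      · right; right; right; right; exact h1
      · right; left; exact ⟨h, h1⟩
  exact ((hneg.union ((integrableOn_abs_rpow_Ioo01 hr).union hnull))).mono_set hsub

lemma integrableOn_abs_rpow_compl_Icc {r : ℝ} (hr : r < (-1:ℝ)) :
    IntegrableOn (fun x : ℝ => |x| ^ r) ((Icc (-1:ℝ) 1)ᶜ) := by
  have hc : (Icc (-1:ℝ) 1)ᶜ = Iio (-1:ℝ) ∪ Ioi (1:ℝ) := by
    ext x
    simp only [mem_compl_iff, mem_Icc, mem_union, mem_Iio, mem_Ioi, not_and_or, not_le]
  rw [hc]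
  apply IntegrableOn.union
  · apply integrableOn_abs_rpow_of_neg
    have : (Neg.neg : ℝ → ℝ) ⁻¹' Iio (-1:ℝ) = Ioi (1:ℝ) := by
      ext x; simp only [mem_preimage, mem_Iio, mem_Ioi]; constructor <;> intro h <;> linarith
    rw [this]
    exact integrableOn_abs_rpow_Ioi1 hr
  · exact integrableOn_abs_rpow_Ioi1 hr

lemma setLIntegral_ofReal_abs_rpow_lt_top {r : ℝ} {s : Set ℝ}
    (h : IntegrableOn (fun x : ℝ => |x| ^ r) s) :
    ∫⁻ x in s, ENNReal.ofReal (|x| ^ r) < ⊤ := by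
  have h2 := h.2
  rw [HasFiniteIntegral] at h2
  refine lt_of_le_of_lt (lintegral_mono fun x => ?_) h2
  rw [← ofReal_norm_eq_enorm, Real.norm_eq_abs, abs_of_nonneg (Real.rpow_nonneg (abs_nonneg x) r)]

section Main

variable {lam : ℝ} (hlam : lam ∈ Set.Ioo (0:ℝ) 1)
  {φ : ℝ → ℝ} (hm : Measurable φ) (hφ1 : Integrable φ)
  (hφbv : eVariationOn φ Set.univ ≠ ⊤)

include hlam hm hφ1 hφbv in
lemma lintegral_kernel_lt_top :
    ∫⁻ p : ℝ × ℝ, ENNReal.ofReal |φ p.2 - φ p.1| *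
      ENNReal.ofReal (|p.2 - p.1| ^ (-(1+lam))) ∂(volume.prod volume) < ⊤ := by
  obtain ⟨hlam0, hlam1⟩ := hlam
  set V : ℝ≥0∞ := eVariationOn φ Set.univ with hV
  set B : ℝ≥0∞ := ∫⁻ x : ℝ, ENNReal.ofReal |φ x| with hB
  have hBfin : B < ⊤ := by
    have := hφ1.hasFiniteIntegral
    rw [HasFiniteIntegral] at this
    refine lt_of_le_of_lt (le_of_eq ?_) this
    apply lintegral_congr
    intro x
    rw [← ofReal_norm_eq_enorm, Real.norm_eq_abs]
  set F : ℝ × ℝ → ℝ≥0∞ := fun p =>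
    ENNReal.ofReal |φ p.2 - φ p.1| * ENNReal.ofReal (|p.2 - p.1| ^ (-(1+lam))) with hF
  have hFm : Measurable F := by
    apply Measurable.fun_mul
    · exact ENNReal.measurable_ofReal.comp ((hm.comp measurable_snd).sub (hm.comp measurable_fst)).abs
    · exact ENNReal.measurable_ofReal.comp (((measurable_snd.sub measurable_fst).abs).pow_const _)
  have hT : MeasurePreserving (fun q : ℝ × ℝ => (q.1, q.1 + q.2))
      (volume.prod volume) (volume.prod volume) := measurePreserving_prod_add volume volume
  have step1 : ∫⁻ p : ℝ × ℝ, F p ∂(volume.prod volume) =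
      ∫⁻ q : ℝ × ℝ, ENNReal.ofReal |φ (q.1 + q.2) - φ q.1| *
        ENNReal.ofReal (|q.2| ^ (-(1+lam))) ∂(volume.prod volume) := by
    rw [← hT.lintegral_comp hFm]
    apply lintegral_congr
    intro q
    simp [hF, add_sub_cancel_left]
  set A : ℝ → ℝ≥0∞ := fun w => ∫⁻ x : ℝ, ENNReal.ofReal |φ (x + w) - φ x| with hA
  set c : ℝ → ℝ≥0∞ := fun w => ENNReal.ofReal (|w| ^ (-(1+lam))) with hc
  have step2 : ∫⁻ q : ℝ × ℝ, ENNReal.ofReal |φ (q.1 + q.2) - φ q.1| *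
        ENNReal.ofReal (|q.2| ^ (-(1+lam))) ∂(volume.prod volume) =
      ∫⁻ w : ℝ, A w * c w := by
    rw [lintegral_prod_symm' _ ?_]
    · apply lintegral_congr
      intro w
      exact lintegral_mul_const' (c w) _ (by simp [hc])
    · apply Measurable.fun_mul
      · exact ENNReal.measurable_ofReal.comp
          ((hm.comp (measurable_fst.add measurable_snd)).sub (hm.comp measurable_fst)).abs
      · exact ENNReal.measurable_ofReal.comp ((measurable_snd.abs).pow_const _)
  have hA1 : ∀ w, A w ≤ ENNReal.ofReal |w| * V := fun w => lintegral_translate_le φ hm w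
  have hA2 : ∀ w, A w ≤ 2 * B := by
    intro w
    have : A w ≤ ∫⁻ x : ℝ, (ENNReal.ofReal |φ (x + w)| + ENNReal.ofReal |φ x|) := by
      apply lintegral_mono
      intro x
      dsimp only
      rw [← ENNReal.ofReal_add (abs_nonneg _) (abs_nonneg _)]
      exact ENNReal.ofReal_le_ofReal (abs_sub _ _)
    rw [lintegral_add_left (f := fun x : ℝ => ENNReal.ofReal |φ (x + w)|)
      (by exact ((hm.comp (measurable_add_const w)).abs).ennreal_ofReal)] at this
    rw [lintegral_add_right_eq_self (fun x => ENNReal.ofReal |φ x|) w] at this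
    calc A w ≤ B + B := this
      _ = 2 * B := (two_mul B).symm
  have split : ∫⁻ w : ℝ, A w * c w =
      (∫⁻ w in Icc (-1:ℝ) 1, A w * c w) + ∫⁻ w in (Icc (-1:ℝ) 1)ᶜ, A w * c w :=
    (lintegral_add_compl _ measurableSet_Icc).symm
  have inner_fin : (∫⁻ w in Icc (-1:ℝ) 1, A w * c w) < ⊤ := by
    have hb : ∀ w : ℝ, A w * c w ≤ V * ENNReal.ofReal (|w| ^ (-lam)) := by
      intro w
      calc A w * c w ≤ (ENNReal.ofReal |w| * V) * c w :=
            mul_le_mul_left (hA1 w) _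
        _ = V * (ENNReal.ofReal |w| * c w) := by ring
        _ = V * ENNReal.ofReal (|w| ^ (-lam)) := by
            congr 1
            rw [hc, ← ENNReal.ofReal_mul (abs_nonneg w)]
            congr 1
            rcases eq_or_ne w 0 with rfl | hw
            · rw [abs_zero, Real.zero_rpow (by linarith), Real.zero_rpow (by linarith), mul_zero]
            · have habs : (0:ℝ) < |w| := abs_pos.2 hw
              nth_rewrite 1 [← Real.rpow_one |w|]
              rw [← Real.rpow_add habs]
              norm_num
    calc (∫⁻ w in Icc (-1:ℝ) 1, A w * c w)
        ≤ ∫⁻ w in Icc (-1:ℝ) 1, V * ENNReal.ofReal (|w| ^ (-lam)) :=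
          lintegral_mono fun w => hb w
      _ = V * ∫⁻ w in Icc (-1:ℝ) 1, ENNReal.ofReal (|w| ^ (-lam)) :=
          lintegral_const_mul' V _ hφbv
      _ < ⊤ := ENNReal.mul_lt_top (lt_top_iff_ne_top.2 hφbv)
          (setLIntegral_ofReal_abs_rpow_lt_top (integrableOn_abs_rpow_Icc (by linarith)))
  have outer_fin : (∫⁻ w in (Icc (-1:ℝ) 1)ᶜ, A w * c w) < ⊤ := by
    calc (∫⁻ w in (Icc (-1:ℝ) 1)ᶜ, A w * c w)
        ≤ ∫⁻ w in (Icc (-1:ℝ) 1)ᶜ, (2 * B) * c w :=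
          lintegral_mono fun w => mul_le_mul_left (hA2 w) _
      _ = (2 * B) * ∫⁻ w in (Icc (-1:ℝ) 1)ᶜ, c w :=
          lintegral_const_mul' _ _ (by finiteness)
      _ < ⊤ := ENNReal.mul_lt_top (by finiteness)
          (setLIntegral_ofReal_abs_rpow_lt_top (integrableOn_abs_rpow_compl_Icc (by linarith)))
  rw [step1, step2, split]
  exact ENNReal.add_lt_top.2 ⟨inner_fin, outer_fin⟩

end Main

/-- For every `φ ∈ L¹(ℝ) ∩ BV(ℝ)`, the double integral
`∫∫ (φ(z) − φ(x))²/|z−x|^{1+λ} dz dx` is finite and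
`∫ φ L[φ] = −(c_λ/2) ∫∫ (φ(z) − φ(x))²/|z−x|^{1+λ} dz dx`. -/
theorem fracLap_energy_identity (lam : ℝ) (hlam : lam ∈ Set.Ioo (0 : ℝ) 1)
    (clam : ℝ) (hclam : 0 < clam)
    (φ : ℝ → ℝ) (hφ1 : Integrable φ) (hφbv : eVariationOn φ Set.univ ≠ ⊤) :
    Integrable (fun p : ℝ × ℝ => (φ p.2 - φ p.1) ^ 2 / |p.2 - p.1| ^ (1 + lam)) ∧
    ∫ x : ℝ, φ x * fracLap clam lam φ x =
      -(clam / 2) * ∫ x : ℝ, ∫ z : ℝ, (φ z - φ x) ^ 2 / |z - x| ^ (1 + lam) := by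
  obtain ⟨hlam0, hlam1⟩ := hlam
  -- measurability of φ
  have hbv : BoundedVariationOn φ Set.univ := hφbv
  obtain ⟨P, Q, hP, hQ, hPQ⟩ :=
    hbv.locallyBoundedVariationOn.exists_monotoneOn_sub_monotoneOn
  have hm : Measurable φ := by
    rw [hPQ]
    exact ((monotoneOn_univ.1 hP).measurable).sub ((monotoneOn_univ.1 hQ).measurable)
  -- the uniform bound
  set Vr : ℝ := (eVariationOn φ Set.univ).toReal with hVr
  have hVr0 : 0 ≤ Vr := ENNReal.toReal_nonneg
  have hdiff : ∀ x y : ℝ, |φ x - φ y| ≤ Vr := by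
    intro x y
    have h1 := eVariationOn.edist_le φ (mem_univ x) (mem_univ y)
    have := ENNReal.toReal_mono hφbv h1
    rwa [edist_dist, ENNReal.toReal_ofReal dist_nonneg, Real.dist_eq] at this
  have hbdd : ∀ x : ℝ, |φ x| ≤ Vr := by
    by_contra h
    push_neg at h
    obtain ⟨x0, hx0⟩ := h
    have hεpos : 0 < |φ x0| - Vr := by linarith
    have huniv : {y : ℝ | |φ x0| - Vr ≤ ‖φ y‖} = Set.univ := by
      ext y
      simp only [mem_setOf_eq, mem_univ, iff_true, Real.norm_eq_abs]
      have h2 := hdiff x0 y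
      have h3 : |φ x0| - |φ y| ≤ |φ x0 - φ y| := abs_sub_abs_le_abs_sub _ _
      linarith
    have hlt := hφ1.measure_norm_ge_lt_top hεpos
    rw [huniv] at hlt
    simp [Real.volume_univ] at hlt
  -- kernel functions
  set den : ℝ × ℝ → ℝ := fun pp => |pp.2 - pp.1| ^ (-(1 + lam)) with hden
  have hden_nonneg : ∀ pp, 0 ≤ den pp := fun pp => Real.rpow_nonneg (abs_nonneg _) _
  have hdiv : ∀ (a : ℝ) (pp : ℝ × ℝ), a / |pp.2 - pp.1| ^ (1 + lam) = a * den pp := by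
    intro a pp
    rw [hden, div_eq_mul_inv, ← Real.rpow_neg (abs_nonneg _)]
  have hdenm : Measurable den := ((measurable_snd.sub measurable_fst).abs).pow_const _
  -- generic integrability criterion
  have key : ∀ ψ : ℝ × ℝ → ℝ, Measurable ψ →
      (∀ pp : ℝ × ℝ, |ψ pp| ≤ 2 * Vr * (|φ pp.2 - φ pp.1| * den pp)) →
      Integrable ψ (volume.prod volume) := by
    intro ψ hψm hψb
    refine ⟨hψm.aestronglyMeasurable, ?_⟩
    rw [HasFiniteIntegral]
    calc ∫⁻ pp : ℝ × ℝ, ‖ψ pp‖₊ ∂volume.prod volume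
        ≤ ∫⁻ pp : ℝ × ℝ, ENNReal.ofReal (2 * Vr) * (ENNReal.ofReal |φ pp.2 - φ pp.1| *
            ENNReal.ofReal (|pp.2 - pp.1| ^ (-(1 + lam)))) ∂volume.prod volume := by
          apply lintegral_mono
          intro pp
          dsimp only
          rw [← enorm_eq_nnnorm, ← ofReal_norm_eq_enorm, Real.norm_eq_abs]
          calc ENNReal.ofReal |ψ pp|
              ≤ ENNReal.ofReal (2 * Vr * (|φ pp.2 - φ pp.1| * den pp)) :=
                ENNReal.ofReal_le_ofReal (hψb pp)
            _ ≤ _ := by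
                rw [ENNReal.ofReal_mul (by positivity), ENNReal.ofReal_mul (abs_nonneg _)]
      _ = ENNReal.ofReal (2 * Vr) * ∫⁻ pp : ℝ × ℝ, ENNReal.ofReal |φ pp.2 - φ pp.1| *
            ENNReal.ofReal (|pp.2 - pp.1| ^ (-(1 + lam))) ∂volume.prod volume :=
          lintegral_const_mul' _ _ (by finiteness)
      _ < ⊤ := ENNReal.mul_lt_top (by finiteness)
          (lintegral_kernel_lt_top ⟨hlam0, hlam1⟩ hm hφ1 hφbv)
  have habs2 : ∀ pp : ℝ × ℝ, |φ pp.2 - φ pp.1| ≤ 2 * Vr := by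
    intro pp
    calc |φ pp.2 - φ pp.1| ≤ |φ pp.2| + |φ pp.1| := abs_sub _ _
      _ ≤ 2 * Vr := by have := hbdd pp.1; have := hbdd pp.2; linarith
  -- integrability of the two product functions
  set gf : ℝ × ℝ → ℝ := fun pp => (φ pp.2 - φ pp.1) ^ 2 / |pp.2 - pp.1| ^ (1 + lam) with hgf
  set qf : ℝ × ℝ → ℝ := fun pp => φ pp.1 * (φ pp.2 - φ pp.1) / |pp.2 - pp.1| ^ (1 + lam) with hqf
  have hgm : Measurable gf := by
    apply Measurable.div
    · exact ((hm.comp measurable_snd).sub (hm.comp measurable_fst)).pow_const 2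
    · exact ((measurable_snd.sub measurable_fst).abs).pow_const _
  have hqm : Measurable qf := by
    apply Measurable.div
    · exact (hm.comp measurable_fst).mul ((hm.comp measurable_snd).sub (hm.comp measurable_fst))
    · exact ((measurable_snd.sub measurable_fst).abs).pow_const _
  have hgi : Integrable gf (volume.prod volume) := by
    apply key _ hgm
    intro pp
    rw [hgf]
    simp only []
    rw [hdiv, abs_mul, abs_of_nonneg (hden_nonneg pp)]
    have h1 : |(φ pp.2 - φ pp.1) ^ 2| = |φ pp.2 - φ pp.1| * |φ pp.2 - φ pp.1| := by
      rw [abs_of_nonneg (sq_nonneg _), sq, ← abs_mul_abs_self]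
    rw [h1]
    have h2 := mul_le_mul_of_nonneg_right
      (mul_le_mul_of_nonneg_right (habs2 pp) (abs_nonneg (φ pp.2 - φ pp.1))) (hden_nonneg pp)
    calc |φ pp.2 - φ pp.1| * |φ pp.2 - φ pp.1| * den pp
        ≤ 2 * Vr * |φ pp.2 - φ pp.1| * den pp := h2
      _ = 2 * Vr * (|φ pp.2 - φ pp.1| * den pp) := by ring
  have hqi : Integrable qf (volume.prod volume) := by
    apply key _ hqm
    intro pp
    rw [hqf]
    simp only []
    rw [hdiv, abs_mul, abs_of_nonneg (hden_nonneg pp), abs_mul]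
    have h2 : |φ pp.1| * |φ pp.2 - φ pp.1| * den pp ≤ Vr * |φ pp.2 - φ pp.1| * den pp :=
      mul_le_mul_of_nonneg_right
        (mul_le_mul_of_nonneg_right (hbdd pp.1) (abs_nonneg _)) (hden_nonneg pp)
    calc |φ pp.1| * |φ pp.2 - φ pp.1| * den pp
        ≤ Vr * |φ pp.2 - φ pp.1| * den pp := h2
      _ ≤ 2 * Vr * (|φ pp.2 - φ pp.1| * den pp) := by
          nlinarith [abs_nonneg (φ pp.2 - φ pp.1), hden_nonneg pp,
            mul_nonneg (abs_nonneg (φ pp.2 - φ pp.1)) (hden_nonneg pp)]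
  constructor
  · rw [Measure.volume_eq_prod]
    exact hgi
  -- the identity
  have E1 : ∀ x : ℝ, φ x * fracLap clam lam φ x = clam * ∫ z : ℝ, qf (x, z) := by
    intro x
    rw [fracLap, restrict_compl_singleton]
    have h1 : ∫ z : ℝ, (φ (x + z) - φ x) / |z| ^ (1 + lam) =
        ∫ z : ℝ, (φ z - φ x) / |z - x| ^ (1 + lam) := by
      have := integral_add_left_eq_self (μ := volume)
        (fun z : ℝ => (φ z - φ x) / |z - x| ^ (1 + lam)) x
      simp only [add_sub_cancel_left] at this
      exact this
    rw [h1]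
    rw [show φ x * (clam * ∫ z : ℝ, (φ z - φ x) / |z - x| ^ (1 + lam)) =
        clam * (φ x * ∫ z : ℝ, (φ z - φ x) / |z - x| ^ (1 + lam)) from by ring]
    congr 1
    rw [← integral_const_mul]
    apply integral_congr_ae
    filter_upwards with z
    rw [hqf]
    simp only []
    ring
  have E2 : ∫ x : ℝ, φ x * fracLap clam lam φ x = clam * ∫ pp : ℝ × ℝ, qf pp ∂volume.prod volume := by
    rw [show (fun x : ℝ => φ x * fracLap clam lam φ x) = fun x : ℝ => clam * ∫ z : ℝ, qf (x, z)
      from funext E1]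
    rw [integral_const_mul]
    congr 1
    exact integral_integral hqi
  have hqswap : Integrable (fun pp : ℝ × ℝ => qf pp.swap) (volume.prod volume) := hqi.swap
  have E3 : ∫ pp : ℝ × ℝ, qf pp.swap ∂volume.prod volume =
      ∫ pp : ℝ × ℝ, qf pp ∂volume.prod volume := integral_prod_swap qf
  have hpt : ∀ pp : ℝ × ℝ, qf pp + qf pp.swap = -gf pp := by
    intro pp
    show φ pp.1 * (φ pp.2 - φ pp.1) / |pp.2 - pp.1| ^ (1 + lam) +
        φ pp.2 * (φ pp.1 - φ pp.2) / |pp.1 - pp.2| ^ (1 + lam) =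
        -((φ pp.2 - φ pp.1) ^ 2 / |pp.2 - pp.1| ^ (1 + lam))
    rw [abs_sub_comm pp.1 pp.2, ← add_div, ← neg_div]
    congr 1
    ring
  have E4 : ∫ pp : ℝ × ℝ, qf pp ∂volume.prod volume =
      -(1 / 2) * ∫ pp : ℝ × ℝ, gf pp ∂volume.prod volume := by
    have hsum : ∫ pp : ℝ × ℝ, (qf pp + qf pp.swap) ∂volume.prod volume =
        (∫ pp : ℝ × ℝ, qf pp ∂volume.prod volume) +
        ∫ pp : ℝ × ℝ, qf pp.swap ∂volume.prod volume := integral_add hqi hqswap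
    have hneg : ∫ pp : ℝ × ℝ, (qf pp + qf pp.swap) ∂volume.prod volume =
        -∫ pp : ℝ × ℝ, gf pp ∂volume.prod volume := by
      rw [← integral_neg]
      apply integral_congr_ae
      filter_upwards with pp
      exact hpt pp
    rw [E3] at hsum
    rw [hneg] at hsum
    linarith
  have E5 : ∫ x : ℝ, ∫ z : ℝ, (φ z - φ x) ^ 2 / |z - x| ^ (1 + lam) =
      ∫ pp : ℝ × ℝ, gf pp ∂volume.prod volume := integral_integral hgi
  rw [E2, E4, E5]
  ring
end

section
/- The weights G^i_j are well defined (each L[1_{I_j}] belongs to L¹(ℝ)) and satisfy: (a) for each i ∈ ℤ, Σ_{k∈ℤ} |G^i_k| < ∞ and Σ_{k∈ℤ} G^i_k = 0; (b) G^i_j = G^j_i and G^{i+1}_{j+1} = G^i_j for all i, j ∈ ℤ; (c) G^i_j ≥ 0 whenever i ≠ j; (d) G^i_i = −c_λ ( ∫_{|z|<1} |z|^{−λ} dz + ∫_{|z|>1} |z|^{−1−λ} dz ) Δx^{1−λ} ≤ 0 for every i ∈ ℤ. -/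
open MeasureTheory Filter Set

/-- Indicator function of the cell `I_j = (jΔx, (j+1)Δx)`. -/
noncomputable def cellInd (Δx : ℝ) (j : ℤ) : ℝ → ℝ :=
  Set.indicator (Set.Ioo ((j : ℝ) * Δx) (((j : ℝ) + 1) * Δx)) 1

/-- The weights `G^i_j = ∫_{I_i} L[1_{I_j}](x) dx`. -/
noncomputable def Gw (clam lam Δx : ℝ) (i j : ℤ) : ℝ :=
  ∫ x in Set.Ioo ((i : ℝ) * Δx) (((i : ℝ) + 1) * Δx), fracLap clam lam (cellInd Δx j) x

namespace GwProof

/-- Length of the overlap of two intervals. -/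
noncomputable def ov (p q r s : ℝ) : ℝ := max 0 (min q s - max p r)

lemma toReal_volume_Ioo (p q : ℝ) : (volume (Ioo p q)).toReal = max 0 (q - p) := by
  rw [Real.volume_Ioo]
  rcases le_total (q - p) 0 with h | h
  · rw [ENNReal.ofReal_of_nonpos h, ENNReal.toReal_zero, max_eq_left h]
  · rw [ENNReal.toReal_ofReal h, max_eq_right h]

lemma integrable_indicator_Ioo (p q : ℝ) :
    Integrable ((Ioo p q).indicator (1 : ℝ → ℝ)) := by
  refine IntegrableOn.integrable_indicator ?_ measurableSet_Ioo
  exact integrableOn_const measure_Ioo_lt_top.ne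

lemma integral_indicator_Ioo (p q : ℝ) :
    ∫ x, (Ioo p q).indicator (1 : ℝ → ℝ) x = max 0 (q - p) := by
  rw [integral_indicator_one measurableSet_Ioo, measureReal_def, toReal_volume_Ioo]

lemma setIntegral_Ioo_indicator (p q r s : ℝ) :
    ∫ x in Ioo p q, (Ioo r s).indicator (1 : ℝ → ℝ) x = ov p q r s := by
  rw [setIntegral_indicator measurableSet_Ioo, Ioo_inter_Ioo]
  simp only [setIntegral_const, smul_eq_mul, mul_one, Pi.one_apply]
  rw [measureReal_def, toReal_volume_Ioo]
  rfl

lemma indicator_comp_add (r s z x : ℝ) :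
    (Ioo r s).indicator (1 : ℝ → ℝ) (x + z) = (Ioo (r - z) (s - z)).indicator (1 : ℝ → ℝ) x := by
  by_cases h : x + z ∈ Ioo r s
  · rw [indicator_of_mem h,
      indicator_of_mem (mem_Ioo.2 ⟨by linarith [h.1], by linarith [h.2]⟩)]
    rfl
  · rw [indicator_of_notMem h, indicator_of_notMem ?_]
    intro hx
    exact h ⟨by linarith [hx.1], by linarith [hx.2]⟩

lemma abs_indicator_sub (A B : Set ℝ) (x : ℝ) :
    |A.indicator (1 : ℝ → ℝ) x - B.indicator (1 : ℝ → ℝ) x| =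
      A.indicator (1 : ℝ → ℝ) x + B.indicator (1 : ℝ → ℝ) x
        - 2 * ((A ∩ B).indicator (1 : ℝ → ℝ) x) := by
  rw [Set.inter_indicator_one]
  by_cases h1 : x ∈ A <;> by_cases h2 : x ∈ B <;>
    simp [indicator_of_mem, indicator_of_notMem, h1, h2]; norm_num

lemma integral_abs_shift {Δx : ℝ} (hΔx : 0 < Δx) (p q z : ℝ) (hpq : q - p = Δx) :
    ∫ x, |(Ioo p q).indicator (1 : ℝ → ℝ) (x + z) - (Ioo p q).indicator (1 : ℝ → ℝ) x|
      = 2 * min Δx |z| := by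
  have key : ∀ x, |(Ioo p q).indicator (1 : ℝ → ℝ) (x + z) - (Ioo p q).indicator (1 : ℝ → ℝ) x|
      = (Ioo (p - z) (q - z)).indicator (1 : ℝ → ℝ) x + (Ioo p q).indicator (1 : ℝ → ℝ) x
        - 2 * ((Ioo ((p - z) ⊔ p) ((q - z) ⊓ q)).indicator (1 : ℝ → ℝ) x) := by
    intro x
    rw [indicator_comp_add, abs_indicator_sub, Ioo_inter_Ioo]
  simp only [key]
  have hA : Integrable (fun x => (Ioo (p - z) (q - z)).indicator (1 : ℝ → ℝ) x
      + (Ioo p q).indicator (1 : ℝ → ℝ) x) := by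
    exact (integrable_indicator_Ioo _ _).add (integrable_indicator_Ioo _ _)
  have hC : Integrable (fun x => 2 * (Ioo ((p - z) ⊔ p) ((q - z) ⊓ q)).indicator (1 : ℝ → ℝ) x) := by
    exact (integrable_indicator_Ioo _ _).const_mul 2
  rw [integral_sub hA hC,
      integral_add (integrable_indicator_Ioo _ _) (integrable_indicator_Ioo _ _),
      integral_const_mul, integral_indicator_Ioo, integral_indicator_Ioo, integral_indicator_Ioo]
  have h1 : q - z - (p - z) = Δx := by linarith
  rw [h1, hpq]
  rcases le_total 0 z with hz | hz
  · have e1 : (q - z) ⊓ q = q - z := min_eq_left (by linarith)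
    have e2 : (p - z) ⊔ p = p := max_eq_right (by linarith)
    rw [e1, e2, abs_of_nonneg hz]
    rcases le_total z Δx with h2 | h2
    · rw [max_eq_right hΔx.le, max_eq_right (by linarith : (0:ℝ) ≤ q - z - p),
        min_eq_right h2]
      linarith
    · rw [max_eq_right hΔx.le, max_eq_left (by linarith : q - z - p ≤ 0), min_eq_left h2]
      linarith
  · have e1 : (q - z) ⊓ q = q := min_eq_right (by linarith)
    have e2 : (p - z) ⊔ p = p - z := max_eq_left (by linarith)
    rw [e1, e2, abs_of_nonpos hz]
    rcases le_total (-z) Δx with h2 | h2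
    · rw [max_eq_right hΔx.le, max_eq_right (by linarith : (0:ℝ) ≤ q - (p - z)),
        min_eq_right h2]
      linarith
    · rw [max_eq_right hΔx.le, max_eq_left (by linarith : q - (p - z) ≤ 0), min_eq_left h2]
      linarith

/-! ### Reflection helpers -/

lemma reflect_setIntegral (f : ℝ → ℝ) (s : Set ℝ) :
    ∫ x in Neg.neg ⁻¹' s, f (-x) = ∫ x in s, f x :=
  (Measure.measurePreserving_neg volume).setIntegral_preimage_emb measurableEmbedding_neg f s

lemma reflect_integrableOn {f : ℝ → ℝ} {s : Set ℝ} (h : IntegrableOn f s) :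
    IntegrableOn (fun x => f (-x)) (Neg.neg ⁻¹' s) :=
  ((Measure.measurePreserving_neg volume).integrableOn_comp_preimage
    measurableEmbedding_neg).2 h

lemma negpre_Ioi (a : ℝ) : (Neg.neg ⁻¹' Ioi a : Set ℝ) = Iio (-a) := by
  ext x; simp only [mem_preimage, mem_Ioi, mem_Iio]; constructor <;> intro h <;> linarith

lemma negpre_Ici (a : ℝ) : (Neg.neg ⁻¹' Ici a : Set ℝ) = Iic (-a) := by
  ext x; simp only [mem_preimage, mem_Ici, mem_Iic]; constructor <;> intro h <;> linarith

lemma negpre_Ioo (a b : ℝ) : (Neg.neg ⁻¹' Ioo a b : Set ℝ) = Ioo (-b) (-a) := by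
  ext x; simp only [mem_preimage, mem_Ioo]
  constructor <;> rintro ⟨h1, h2⟩ <;> exact ⟨by linarith, by linarith⟩

/-! ### The dominating function -/

noncomputable def g0 (lam Δx : ℝ) (z : ℝ) : ℝ := min Δx |z| / |z| ^ (1 + lam)

lemma g0_neg (lam Δx z : ℝ) : g0 lam Δx (-z) = g0 lam Δx z := by simp [g0]

lemma g0_eq_Ioc {lam Δx : ℝ} (z : ℝ) (hz : z ∈ Ioc 0 Δx) :
    g0 lam Δx z = z ^ (-lam) := by
  rw [g0, abs_of_pos hz.1, min_eq_right hz.2]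
  rw [show z / z ^ (1 + lam) = z ^ (1:ℝ) / z ^ (1 + lam) by rw [Real.rpow_one],
    ← Real.rpow_sub hz.1]
  norm_num

lemma g0_eq_Ioi {lam Δx : ℝ} (hΔx : 0 < Δx) (z : ℝ) (hz : z ∈ Ioi Δx) :
    g0 lam Δx z = Δx * z ^ (-1 - lam) := by
  have hz0 : 0 < z := lt_trans hΔx hz
  rw [g0, abs_of_pos hz0, min_eq_left (le_of_lt hz), show (-1 - lam) = -(1 + lam) by ring,
    Real.rpow_neg hz0.le, div_eq_mul_inv]

lemma g0_integrableOn_Ioc {lam Δx : ℝ} (hlam : 0 < lam) (hlam1 : lam < 1) (hΔx : 0 < Δx) :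
    IntegrableOn (g0 lam Δx) (Ioc 0 Δx) := by
  have h := (intervalIntegral.intervalIntegrable_rpow'
    (show (-1:ℝ) < -lam by linarith) (a := 0) (b := Δx)).1
  exact h.congr_fun (fun z hz => (g0_eq_Ioc z hz).symm) measurableSet_Ioc

lemma g0_integrableOn_Ioi {lam Δx : ℝ} (hlam : 0 < lam) (hΔx : 0 < Δx) :
    IntegrableOn (g0 lam Δx) (Ioi Δx) := by
  have h := (integrableOn_Ioi_rpow_of_lt (show (-1 - lam) < -1 by linarith) hΔx).const_mul Δx
  exact IntegrableOn.congr_fun h (fun z hz => (g0_eq_Ioi hΔx z hz).symm) measurableSet_Ioi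

lemma g0_integrableOn_Ioi_zero {lam Δx : ℝ} (hlam : 0 < lam) (hlam1 : lam < 1) (hΔx : 0 < Δx) :
    IntegrableOn (g0 lam Δx) (Ioi 0) := by
  rw [← Ioc_union_Ioi_eq_Ioi hΔx.le]
  exact (g0_integrableOn_Ioc hlam hlam1 hΔx).union (g0_integrableOn_Ioi hlam hΔx)

lemma g0_integrable {lam Δx : ℝ} (hlam : 0 < lam) (hlam1 : lam < 1) (hΔx : 0 < Δx) :
    Integrable (g0 lam Δx) := by
  rw [← integrableOn_univ, ← Set.Iic_union_Ioi (a := (0:ℝ))]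
  refine IntegrableOn.union ?_ (g0_integrableOn_Ioi_zero hlam hlam1 hΔx)
  have hIci : IntegrableOn (g0 lam Δx) (Ici 0) :=
    (integrableOn_Ici_iff_integrableOn_Ioi (by simp)).2 (g0_integrableOn_Ioi_zero hlam hlam1 hΔx)
  have h := reflect_integrableOn hIci
  rw [negpre_Ici, neg_zero] at h
  exact h.congr_fun (fun z _ => g0_neg lam Δx z) measurableSet_Iic

lemma g0_integral {lam Δx : ℝ} (hlam : 0 < lam) (hlam1 : lam < 1) (hΔx : 0 < Δx) :
    ∫ z, g0 lam Δx z = (2 / (1 - lam) + 2 / lam) * Δx ^ (1 - lam) := by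
  have hg := g0_integrable hlam hlam1 hΔx
  have I1 : ∫ z in Ioc 0 Δx, g0 lam Δx z = Δx ^ (1 - lam) / (1 - lam) := by
    rw [setIntegral_congr_fun measurableSet_Ioc (fun z hz => g0_eq_Ioc z hz),
      ← intervalIntegral.integral_of_le hΔx.le,
      integral_rpow (Or.inl (by linarith : (-1:ℝ) < -lam)),
      Real.zero_rpow (by linarith : -lam + 1 ≠ 0), show -lam + 1 = 1 - lam by ring]
    ring
  have I2 : ∫ z in Ioi Δx, g0 lam Δx z = Δx ^ (1 - lam) / lam := by
    rw [setIntegral_congr_fun measurableSet_Ioi (fun z hz => g0_eq_Ioi hΔx z hz),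
      integral_const_mul, integral_Ioi_rpow_of_lt (by linarith : (-1 - lam) < -1) hΔx,
      show -1 - lam + 1 = -lam by ring,
      show Δx ^ (1 - lam) = Δx * Δx ^ (-lam) by
        rw [show (1 - lam) = 1 + -lam by ring, Real.rpow_add hΔx, Real.rpow_one]]
    field_simp
  have I3 : ∫ z in Ioi 0, g0 lam Δx z
      = Δx ^ (1 - lam) / (1 - lam) + Δx ^ (1 - lam) / lam := by
    rw [← Ioc_union_Ioi_eq_Ioi hΔx.le,
      setIntegral_union (by exact disjoint_left.2 fun x hx hx' => absurd hx.2 (not_le.2 hx'))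
        measurableSet_Ioi (g0_integrableOn_Ioc hlam hlam1 hΔx)
        (g0_integrableOn_Ioi hlam hΔx), I1, I2]
  have I4 : ∫ z in Iio 0, g0 lam Δx z = ∫ z in Ioi 0, g0 lam Δx z := by
    have h := reflect_setIntegral (g0 lam Δx) (Ioi 0)
    rw [negpre_Ioi, neg_zero] at h
    rw [← h]
    exact setIntegral_congr_fun measurableSet_Iio fun z _ => (g0_neg lam Δx z).symm
  rw [← intervalIntegral.integral_Iio_add_Ici (hg.integrableOn) (hg.integrableOn),
    integral_Ici_eq_integral_Ioi, I4, I3]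
  field_simp
  ring

/-! ### The two model integrals appearing in the statement -/

lemma intA {lam : ℝ} (hlam : 0 < lam) (hlam1 : lam < 1) :
    ∫ z in {z : ℝ | |z| < 1}, |z| ^ (-lam) = 2 / (1 - lam) := by
  have hset : {z : ℝ | |z| < 1} = Ioo (-1) 1 := by
    ext z; simp [abs_lt]
  have hmodel : IntegrableOn (fun z : ℝ => z ^ (-lam)) (Ioc 0 1) :=
    (intervalIntegral.intervalIntegrable_rpow' (show (-1:ℝ) < -lam by linarith)
      (a := 0) (b := 1)).1
  have habs : IntegrableOn (fun z : ℝ => |z| ^ (-lam)) (Ioo 0 1) := by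
    refine IntegrableOn.congr_fun (hmodel.mono_set Ioo_subset_Ioc_self) ?_ measurableSet_Ioo
    exact fun z hz => by rw [abs_of_pos hz.1]
  have hIoo01 : ∫ z in Ioo (0:ℝ) 1, |z| ^ (-lam) = 1 / (1 - lam) := by
    rw [setIntegral_congr_fun measurableSet_Ioo (fun z hz => by rw [abs_of_pos hz.1]),
      ← integral_Ioc_eq_integral_Ioo, ← intervalIntegral.integral_of_le zero_le_one,
      integral_rpow (Or.inl (by linarith : (-1:ℝ) < -lam)),
      Real.zero_rpow (by linarith : -lam + 1 ≠ 0), Real.one_rpow,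
      show -lam + 1 = 1 - lam by ring]
    norm_num
  have hneg : ∫ z in Ioo (-1 : ℝ) 0, |z| ^ (-lam) = 1 / (1 - lam) := by
    have h := reflect_setIntegral (fun z : ℝ => |z| ^ (-lam)) (Ioo 0 1)
    rw [negpre_Ioo, neg_zero] at h
    rw [show (-(1:ℝ)) = -1 by norm_num] at h
    rw [← hIoo01, ← h]
    exact setIntegral_congr_fun measurableSet_Ioo fun z _ => by rw [abs_neg]
  have hnegInt : IntegrableOn (fun z : ℝ => |z| ^ (-lam)) (Ioo (-1 : ℝ) 0) := by
    have h := reflect_integrableOn habs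
    rw [negpre_Ioo, neg_zero] at h
    exact IntegrableOn.congr_fun h (fun z _ => by simp [abs_neg]) measurableSet_Ioo
  rw [hset, ← Ioo_union_Ico_eq_Ioo (show (-1:ℝ) < 0 by norm_num) (show (0:ℝ) ≤ 1 by norm_num),
    setIntegral_union (by exact disjoint_left.2 fun x hx hx' => absurd hx'.1 (not_le.2 hx.2))
      measurableSet_Ico hnegInt ((integrableOn_Ico_iff_integrableOn_Ioo (by simp)).2 habs),
    integral_Ico_eq_integral_Ioo, hneg, hIoo01]
  ring

lemma intB {lam : ℝ} (hlam : 0 < lam) :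
    ∫ z in {z : ℝ | 1 < |z|}, |z| ^ (-1 - lam) = 2 / lam := by
  have hset : {z : ℝ | 1 < |z|} = Iio (-1 : ℝ) ∪ Ioi 1 := by
    ext z
    rw [mem_setOf_eq, lt_abs, mem_union, mem_Iio, mem_Ioi]
    constructor
    · rintro (h | h)
      · right; exact h
      · left; linarith
    · rintro (h | h)
      · right; linarith
      · left; exact h
  have hmodel : IntegrableOn (fun z : ℝ => z ^ (-1 - lam)) (Ioi 1) :=
    integrableOn_Ioi_rpow_of_lt (by linarith) one_pos
  have habs : IntegrableOn (fun z : ℝ => |z| ^ (-1 - lam)) (Ioi 1) := by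
    refine IntegrableOn.congr_fun hmodel ?_ measurableSet_Ioi
    exact fun z hz => by rw [abs_of_pos (lt_trans one_pos hz)]
  have hIoi : ∫ z in Ioi (1:ℝ), |z| ^ (-1 - lam) = 1 / lam := by
    rw [setIntegral_congr_fun measurableSet_Ioi
        (fun z hz => by rw [abs_of_pos (lt_trans one_pos hz)]),
      integral_Ioi_rpow_of_lt (by linarith) one_pos, show -1 - lam + 1 = -lam by ring,
      Real.one_rpow]
    field_simp
  have hneg : ∫ z in Iio (-1 : ℝ), |z| ^ (-1 - lam) = 1 / lam := by
    have h := reflect_setIntegral (fun z : ℝ => |z| ^ (-1 - lam)) (Ioi 1)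
    rw [negpre_Ioi] at h
    rw [← hIoi, ← h]
    exact setIntegral_congr_fun measurableSet_Iio fun z _ => by rw [abs_neg]
  have hnegInt : IntegrableOn (fun z : ℝ => |z| ^ (-1 - lam)) (Iio (-1 : ℝ)) := by
    have h := reflect_integrableOn habs
    rw [negpre_Ioi] at h
    exact IntegrableOn.congr_fun h (fun z _ => by rw [abs_neg]) measurableSet_Iio
  have hdisj : Disjoint (Iio (-1 : ℝ)) (Ioi 1) := by
    refine disjoint_left.2 fun x hx hx' => ?_
    simp only [mem_Iio] at hx
    simp only [mem_Ioi] at hx'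
    linarith
  rw [hset, setIntegral_union hdisj measurableSet_Ioi hnegInt habs, hIoi, hneg]
  ring

/-! ### ov algebra -/

lemma ov_comm (p q r s : ℝ) : ov p q r s = ov r s p q := by
  unfold ov; rw [min_comm q s, max_comm p r]

lemma ov_shift (p q r s z : ℝ) : ov p q (r - z) (s - z) = ov r s (p + z) (q + z) := by
  unfold ov
  have h1 : min s (q + z) = min (s - z) q + z := by
    rw [← min_add_add_right, sub_add_cancel]
  have h2 : max r (p + z) = max (r - z) p + z := by
    rw [← max_add_add_right, sub_add_cancel]
  rw [h1, h2, min_comm q (s - z), max_comm p (r - z)]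
  congr 1
  ring

lemma ov_translate (p q r s c : ℝ) : ov (p + c) (q + c) (r + c) (s + c) = ov p q r s := by
  unfold ov
  rw [min_add_add_right, max_add_add_right]
  congr 1
  ring

lemma ov_self {Δx : ℝ} (hΔx : 0 < Δx) {p q : ℝ} (hpq : q - p = Δx) : ov p q p q = Δx := by
  unfold ov
  rw [min_self, max_self, hpq]
  exact max_eq_right hΔx.le

lemma ov_diag {Δx : ℝ} {p q : ℝ} (hpq : q - p = Δx) (z : ℝ) :
    ov p q (p - z) (q - z) = max 0 (Δx - |z|) := by
  unfold ov
  rcases le_total 0 z with hz | hz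
  · have h1 : min q (q - z) = q - z := min_eq_right (by linarith)
    have h2 : max p (p - z) = p := max_eq_left (by linarith)
    rw [h1, h2, abs_of_nonneg hz]
    congr 1; linarith
  · have h1 : min q (q - z) = q := min_eq_left (by linarith)
    have h2 : max p (p - z) = p - z := max_eq_right (by linarith)
    rw [h1, h2, abs_of_nonpos hz]
    congr 1; linarith

lemma max_sub_eq_neg_min {Δx t : ℝ} (hΔx : 0 < Δx) (ht : 0 ≤ t) :
    max 0 (Δx - t) - Δx = -min Δx t := by
  rcases le_total t Δx with h | h
  · rw [max_eq_right (by linarith), min_eq_right h]; ring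
  · rw [max_eq_left (by linarith), min_eq_left h]; ring

/-! ### The product integrand -/

/-- The integrand of the fractional Laplacian of an interval indicator, as a function of a pair. -/
noncomputable def Hf (lam p q : ℝ) : ℝ × ℝ → ℝ := fun w =>
  ((Ioo p q).indicator (1 : ℝ → ℝ) (w.1 + w.2) - (Ioo p q).indicator (1 : ℝ → ℝ) w.1)
    / |w.2| ^ (1 + lam)

lemma measurable_Hf {lam : ℝ} (hlam : 0 < lam) (p q : ℝ) : Measurable (Hf lam p q) := by
  have hm : Measurable ((Ioo p q).indicator (1 : ℝ → ℝ)) :=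
    measurable_one.indicator measurableSet_Ioo
  exact ((hm.comp (measurable_fst.add measurable_snd)).sub (hm.comp measurable_fst)).div
    ((Real.continuous_rpow_const (by linarith)).measurable.comp measurable_snd.abs)

lemma slice_integrable (lam p q : ℝ) (z : ℝ) :
    Integrable (fun x => Hf lam p q (x, z)) := by
  show Integrable (fun x => ((Ioo p q).indicator (1 : ℝ → ℝ) (x + z)
    - (Ioo p q).indicator (1 : ℝ → ℝ) x) / |z| ^ (1 + lam)) volume
  exact (((integrable_indicator_Ioo p q).comp_add_right z).sub
    (integrable_indicator_Ioo p q)).div_const (|z| ^ (1 + lam))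

lemma norm_slice {lam Δx : ℝ} (hΔx : 0 < Δx) {p q : ℝ} (hpq : q - p = Δx) (z : ℝ) :
    ∫ x, ‖Hf lam p q (x, z)‖ = 2 * g0 lam Δx z := by
  have hc : (0 : ℝ) ≤ |z| ^ (1 + lam) := Real.rpow_nonneg (abs_nonneg z) _
  have key : ∀ x, ‖Hf lam p q (x, z)‖
      = |(Ioo p q).indicator (1 : ℝ → ℝ) (x + z) - (Ioo p q).indicator (1 : ℝ → ℝ) x|
        / |z| ^ (1 + lam) := by
    intro x
    rw [Hf, Real.norm_eq_abs, abs_div, abs_of_nonneg hc]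
  simp only [key]
  rw [integral_div, integral_abs_shift hΔx p q z hpq, g0]
  ring

lemma Hf_integrable {lam Δx : ℝ} (hlam : 0 < lam) (hlam1 : lam < 1) (hΔx : 0 < Δx)
    {p q : ℝ} (hpq : q - p = Δx) :
    Integrable (Hf lam p q) (volume.prod volume) := by
  refine (integrable_prod_iff' (measurable_Hf hlam p q).aestronglyMeasurable).2 ⟨?_, ?_⟩
  · exact ae_of_all _ fun z => slice_integrable lam p q z
  · have h : (fun z => ∫ x, ‖Hf lam p q (x, z)‖) = fun z => 2 * g0 lam Δx z := by
      funext z; exact norm_slice hΔx hpq z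
    rw [h]
    exact (g0_integrable hlam hlam1 hΔx).const_mul 2

/-! ### fracLap of a cell indicator -/

noncomputable def PP (Δx : ℝ) (j : ℤ) : ℝ := (j : ℝ) * Δx
noncomputable def QQ (Δx : ℝ) (j : ℤ) : ℝ := ((j : ℝ) + 1) * Δx

lemma QQ_sub_PP (Δx : ℝ) (j : ℤ) : QQ Δx j - PP Δx j = Δx := by
  unfold PP QQ; ring

lemma fracLap_eq (clam lam Δx : ℝ) (j : ℤ) (x : ℝ) :
    fracLap clam lam (cellInd Δx j) x
      = clam * ∫ z, Hf lam (PP Δx j) (QQ Δx j) (x, z) := by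
  unfold fracLap
  congr 1
  have h0 : ({0}ᶜ : Set ℝ) =ᵐ[volume] (univ : Set ℝ) := by
    rw [ae_eq_univ, compl_compl]
    exact measure_singleton 0
  rw [setIntegral_congr_set h0, setIntegral_univ]
  rfl

lemma fracLap_integrable {lam Δx : ℝ} (hlam : 0 < lam) (hlam1 : lam < 1) (hΔx : 0 < Δx)
    (clam : ℝ) (j : ℤ) : Integrable (fracLap clam lam (cellInd Δx j)) := by
  have hH := Hf_integrable hlam hlam1 hΔx (QQ_sub_PP Δx j)
  have h2 := (hH.integral_prod_left).const_mul clam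
  exact h2.congr (ae_of_all _ fun x => (fracLap_eq clam lam Δx j x).symm)

lemma fracLap_integral_zero {lam Δx : ℝ} (hlam : 0 < lam) (hlam1 : lam < 1) (hΔx : 0 < Δx)
    (clam : ℝ) (j : ℤ) : ∫ x, fracLap clam lam (cellInd Δx j) x = 0 := by
  have hH := Hf_integrable hlam hlam1 hΔx (QQ_sub_PP Δx j)
  rw [integral_congr_ae (ae_of_all _ fun x => fracLap_eq clam lam Δx j x), integral_const_mul]
  have h1 : ∫ x, ∫ z, Hf lam (PP Δx j) (QQ Δx j) (x, z)
      = ∫ z, ∫ x, Hf lam (PP Δx j) (QQ Δx j) (x, z) :=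
    integral_integral_swap (by exact hH)
  rw [h1]
  have h2 : ∀ z : ℝ, ∫ x, Hf lam (PP Δx j) (QQ Δx j) (x, z) = 0 := by
    intro z
    have hx : ∀ x, Hf lam (PP Δx j) (QQ Δx j) (x, z)
        = ((Ioo (PP Δx j) (QQ Δx j)).indicator (1 : ℝ → ℝ) (x + z)
          - (Ioo (PP Δx j) (QQ Δx j)).indicator (1 : ℝ → ℝ) x) / |z| ^ (1 + lam) :=
      fun x => rfl
    simp only [hx]
    rw [integral_div,
      integral_sub ((integrable_indicator_Ioo _ _).comp_add_right z)
        (integrable_indicator_Ioo _ _),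
      integral_add_right_eq_self ((Ioo (PP Δx j) (QQ Δx j)).indicator (1 : ℝ → ℝ)) z,
      sub_self, zero_div]
  simp only [h2, integral_zero, mul_zero]

/-! ### Representation of the weights -/

lemma Gw_repr {lam Δx : ℝ} (hlam : 0 < lam) (hlam1 : lam < 1) (hΔx : 0 < Δx)
    (clam : ℝ) (i j : ℤ) :
    Gw clam lam Δx i j = clam * ∫ z,
      (ov (PP Δx i) (QQ Δx i) (PP Δx j - z) (QQ Δx j - z)
        - ov (PP Δx i) (QQ Δx i) (PP Δx j) (QQ Δx j)) / |z| ^ (1 + lam) := by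
  have hH := Hf_integrable hlam hlam1 hΔx (QQ_sub_PP Δx j)
  have hrestr : Integrable (Hf lam (PP Δx j) (QQ Δx j))
      ((volume.restrict (Ioo (PP Δx i) (QQ Δx i))).prod volume) := by
    have h := hH.restrict (s := (Ioo (PP Δx i) (QQ Δx i)) ×ˢ (univ : Set ℝ))
    rwa [← Measure.prod_restrict, Measure.restrict_univ] at h
  unfold Gw
  have e1 : ((i : ℝ) * Δx) = PP Δx i := rfl
  have e2 : (((i : ℝ) + 1) * Δx) = QQ Δx i := rfl
  rw [e1, e2, setIntegral_congr_fun measurableSet_Ioo (fun x _ => fracLap_eq clam lam Δx j x),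
    integral_const_mul]
  congr 1
  have h1 : ∫ x in Ioo (PP Δx i) (QQ Δx i), ∫ z, Hf lam (PP Δx j) (QQ Δx j) (x, z)
      = ∫ z, ∫ x in Ioo (PP Δx i) (QQ Δx i), Hf lam (PP Δx j) (QQ Δx j) (x, z) :=
    integral_integral_swap (by exact hrestr)
  rw [h1]
  refine integral_congr_ae (ae_of_all _ fun z => ?_)
  have hx : ∀ x, Hf lam (PP Δx j) (QQ Δx j) (x, z)
      = ((Ioo (PP Δx j - z) (QQ Δx j - z)).indicator (1 : ℝ → ℝ) x
        - (Ioo (PP Δx j) (QQ Δx j)).indicator (1 : ℝ → ℝ) x) / |z| ^ (1 + lam) := by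
    intro x
    have : Hf lam (PP Δx j) (QQ Δx j) (x, z)
        = ((Ioo (PP Δx j) (QQ Δx j)).indicator (1 : ℝ → ℝ) (x + z)
          - (Ioo (PP Δx j) (QQ Δx j)).indicator (1 : ℝ → ℝ) x) / |z| ^ (1 + lam) := rfl
    rw [this, indicator_comp_add]
  simp only [hx]
  rw [integral_div,
    integral_sub ((integrable_indicator_Ioo _ _).integrableOn)
      ((integrable_indicator_Ioo _ _).integrableOn),
    setIntegral_Ioo_indicator, setIntegral_Ioo_indicator]

/-! ### Symmetry and translation invariance -/

lemma Gw_symm {lam Δx : ℝ} (hlam : 0 < lam) (hlam1 : lam < 1) (hΔx : 0 < Δx)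
    (clam : ℝ) (i j : ℤ) : Gw clam lam Δx i j = Gw clam lam Δx j i := by
  rw [Gw_repr hlam hlam1 hΔx clam i j, Gw_repr hlam hlam1 hΔx clam j i]
  congr 1
  rw [← integral_neg_eq_self]
  refine integral_congr_ae (ae_of_all _ fun z => ?_)
  simp only [abs_neg, sub_neg_eq_add,
    ov_shift (PP Δx j) (QQ Δx j) (PP Δx i) (QQ Δx i),
    ov_comm (PP Δx i) (QQ Δx i) (PP Δx j) (QQ Δx j)]

lemma Gw_translate {lam Δx : ℝ} (hlam : 0 < lam) (hlam1 : lam < 1) (hΔx : 0 < Δx)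
    (clam : ℝ) (i j : ℤ) : Gw clam lam Δx (i + 1) (j + 1) = Gw clam lam Δx i j := by
  rw [Gw_repr hlam hlam1 hΔx clam (i+1) (j+1), Gw_repr hlam hlam1 hΔx clam i j]
  congr 1
  refine integral_congr_ae (ae_of_all _ fun z => ?_)
  have ePi : PP Δx (i + 1) = PP Δx i + Δx := by unfold PP; push_cast; ring
  have eQi : QQ Δx (i + 1) = QQ Δx i + Δx := by unfold QQ; push_cast; ring
  have ePj : PP Δx (j + 1) = PP Δx j + Δx := by unfold PP; push_cast; ring
  have eQj : QQ Δx (j + 1) = QQ Δx j + Δx := by unfold QQ; push_cast; ring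
  simp only [ePi, eQi, ePj, eQj,
    show PP Δx j + Δx - z = (PP Δx j - z) + Δx from by ring,
    show QQ Δx j + Δx - z = (QQ Δx j - z) + Δx from by ring, ov_translate]

/-! ### Sign off the diagonal -/

lemma Gw_nonneg {lam Δx : ℝ} (hΔx : 0 < Δx) {clam : ℝ} (hclam : 0 ≤ clam)
    {i j : ℤ} (hij : i ≠ j) : 0 ≤ Gw clam lam Δx i j := by
  unfold Gw
  refine setIntegral_nonneg measurableSet_Ioo fun x hx => ?_
  have hx0 : cellInd Δx j x = 0 := by
    unfold cellInd
    apply indicator_of_notMem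
    intro hmem
    rcases lt_or_gt_of_ne hij with h | h
    · have h1 : ((i : ℝ) + 1) ≤ (j : ℝ) := by exact_mod_cast (by omega : (i + 1 : ℤ) ≤ j)
      have h2 := hx.2
      have h3 := hmem.1
      nlinarith [mul_le_mul_of_nonneg_right h1 hΔx.le]
    · have h1 : ((j : ℝ) + 1) ≤ (i : ℝ) := by exact_mod_cast (by omega : (j + 1 : ℤ) ≤ i)
      have h2 := hx.1
      have h3 := hmem.2
      nlinarith [mul_le_mul_of_nonneg_right h1 hΔx.le]
  unfold fracLap
  refine mul_nonneg hclam (integral_nonneg fun z => ?_)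
  rw [hx0, sub_zero]
  refine div_nonneg ?_ (Real.rpow_nonneg (abs_nonneg z) _)
  unfold cellInd
  exact indicator_nonneg (fun _ _ => zero_le_one) _

/-! ### Summability -/

lemma pairwise_disjoint_cells {Δx : ℝ} (hΔx : 0 < Δx) :
    Pairwise (Function.onFun Disjoint (fun k : ℤ => Ioo (PP Δx k) (QQ Δx k))) := by
  have key : ∀ k l : ℤ, k < l →
      Disjoint (Ioo (PP Δx k) (QQ Δx k)) (Ioo (PP Δx l) (QQ Δx l)) := by
    intro k l h
    refine disjoint_left.2 fun x hx hx' => ?_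
    have h1 : ((k : ℝ) + 1) ≤ (l : ℝ) := by exact_mod_cast (by omega : (k + 1 : ℤ) ≤ l)
    have h2 := hx.2
    have h3 := hx'.1
    simp only [PP, QQ] at h2 h3
    nlinarith [mul_le_mul_of_nonneg_right h1 hΔx.le]
  intro k l hkl
  rcases lt_or_gt_of_ne hkl with h | h
  · exact key k l h
  · exact (key l k h).symm

lemma union_cells_ae {Δx : ℝ} (hΔx : 0 < Δx) :
    (⋃ k : ℤ, Ioo (PP Δx k) (QQ Δx k)) =ᵐ[volume] (univ : Set ℝ) := by
  rw [ae_eq_univ]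
  refine measure_mono_null ?_
    ((countable_range (fun k : ℤ => (k : ℝ) * Δx)).measure_zero volume)
  intro x hx
  simp only [mem_compl_iff, mem_iUnion, not_exists] at hx
  have hk := hx ⌊x / Δx⌋
  have h1 : (⌊x / Δx⌋ : ℝ) ≤ x / Δx := Int.floor_le _
  have h2 : x / Δx < ⌊x / Δx⌋ + 1 := Int.lt_floor_add_one _
  have hle : (⌊x / Δx⌋ : ℝ) * Δx ≤ x := (le_div_iff₀ hΔx).1 h1
  have hlt : x < ((⌊x / Δx⌋ : ℝ) + 1) * Δx := (div_lt_iff₀ hΔx).1 h2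
  have hnot : ¬ ((⌊x / Δx⌋ : ℝ) * Δx < x) := by
    intro hc
    exact hk ⟨hc, hlt⟩
  exact ⟨⌊x / Δx⌋, le_antisymm hle (not_lt.1 hnot)⟩

lemma Gw_sum {lam Δx : ℝ} (hlam : 0 < lam) (hlam1 : lam < 1) (hΔx : 0 < Δx)
    (clam : ℝ) (i : ℤ) :
    Summable (fun k : ℤ => |Gw clam lam Δx i k|) ∧ ∑' k : ℤ, Gw clam lam Δx i k = 0 := by
  have hInt : Integrable (fracLap clam lam (cellInd Δx i)) :=
    fracLap_integrable hlam hlam1 hΔx clam i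
  have hm : ∀ k : ℤ, MeasurableSet (Ioo (PP Δx k) (QQ Δx k)) := fun k => measurableSet_Ioo
  have hd : Pairwise (Function.onFun Disjoint fun k : ℤ => Ioo (PP Δx k) (QQ Δx k)) :=
    pairwise_disjoint_cells hΔx
  have hAbs : HasSum
      (fun k : ℤ => ∫ x in Ioo (PP Δx k) (QQ Δx k), |fracLap clam lam (cellInd Δx i) x|)
      (∫ x in ⋃ k : ℤ, Ioo (PP Δx k) (QQ Δx k), |fracLap clam lam (cellInd Δx i) x|) :=
    hasSum_integral_iUnion hm hd (hInt.abs.integrableOn)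
  have hSum : HasSum
      (fun k : ℤ => ∫ x in Ioo (PP Δx k) (QQ Δx k), fracLap clam lam (cellInd Δx i) x)
      (∫ x in ⋃ k : ℤ, Ioo (PP Δx k) (QQ Δx k), fracLap clam lam (cellInd Δx i) x) :=
    hasSum_integral_iUnion hm hd hInt.integrableOn
  have hU : ∫ x in ⋃ k : ℤ, Ioo (PP Δx k) (QQ Δx k), fracLap clam lam (cellInd Δx i) x = 0 := by
    rw [setIntegral_congr_set (union_cells_ae hΔx), setIntegral_univ]
    exact fracLap_integral_zero hlam hlam1 hΔx clam i
  have hGwk : ∀ k : ℤ, Gw clam lam Δx i k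
      = ∫ x in Ioo (PP Δx k) (QQ Δx k), fracLap clam lam (cellInd Δx i) x := by
    intro k
    rw [Gw_symm hlam hlam1 hΔx clam i k]
    rfl
  constructor
  · refine Summable.of_nonneg_of_le (fun k => abs_nonneg _) (fun k => ?_) hAbs.summable
    rw [hGwk k]
    simpa [Real.norm_eq_abs] using
      norm_integral_le_integral_norm
        (μ := volume.restrict (Ioo (PP Δx k) (QQ Δx k))) (fracLap clam lam (cellInd Δx i))
  · rw [tsum_congr hGwk, hSum.tsum_eq, hU]

/-! ### Diagonal value -/

lemma Gw_diag {lam Δx : ℝ} (hlam : 0 < lam) (hlam1 : lam < 1) (hΔx : 0 < Δx)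
    (clam : ℝ) (i : ℤ) :
    Gw clam lam Δx i i = -(clam * ((2 / (1 - lam) + 2 / lam) * Δx ^ (1 - lam))) := by
  rw [Gw_repr hlam hlam1 hΔx clam i i]
  have hpt : ∀ z : ℝ, (ov (PP Δx i) (QQ Δx i) (PP Δx i - z) (QQ Δx i - z)
      - ov (PP Δx i) (QQ Δx i) (PP Δx i) (QQ Δx i)) / |z| ^ (1 + lam) = -g0 lam Δx z := by
    intro z
    rw [ov_diag (QQ_sub_PP Δx i), ov_self hΔx (QQ_sub_PP Δx i),
      max_sub_eq_neg_min hΔx (abs_nonneg z), g0, neg_div]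
  rw [integral_congr_ae (ae_of_all _ hpt), integral_neg, g0_integral hlam hlam1 hΔx]
  ring

end GwProof

open GwProof in
/-- Properties of the weights `G^i_j`:  well-definedness, summability and zero total sum,
symmetry and translation invariance, sign off the diagonal, and explicit diagonal value. -/
theorem Gw_properties (lam : ℝ) (hlam : lam ∈ Set.Ioo (0 : ℝ) 1)
    (clam : ℝ) (hclam : 0 < clam) (Δx : ℝ) (hΔx : 0 < Δx) :
    (∀ j : ℤ, Integrable (fracLap clam lam (cellInd Δx j))) ∧
    (∀ i : ℤ, Summable (fun k : ℤ => |Gw clam lam Δx i k|) ∧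
      ∑' k : ℤ, Gw clam lam Δx i k = 0) ∧
    (∀ i j : ℤ, Gw clam lam Δx i j = Gw clam lam Δx j i ∧
      Gw clam lam Δx (i + 1) (j + 1) = Gw clam lam Δx i j) ∧
    (∀ i j : ℤ, i ≠ j → 0 ≤ Gw clam lam Δx i j) ∧
    (∀ i : ℤ,
      Gw clam lam Δx i i =
        -clam * ((∫ z in {z : ℝ | |z| < 1}, |z| ^ (-lam)) +
          ∫ z in {z : ℝ | 1 < |z|}, |z| ^ (-1 - lam)) * Δx ^ (1 - lam) ∧
      Gw clam lam Δx i i ≤ 0) := by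
  obtain ⟨hl0, hl1⟩ := hlam
  refine ⟨fun j => fracLap_integrable hl0 hl1 hΔx clam j,
    fun i => Gw_sum hl0 hl1 hΔx clam i,
    fun i j => ⟨Gw_symm hl0 hl1 hΔx clam i j, Gw_translate hl0 hl1 hΔx clam i j⟩,
    fun i j hij => Gw_nonneg hΔx hclam.le hij,
    fun i => ?_⟩
  have hval := Gw_diag hl0 hl1 hΔx clam i
  have hA := intA hl0 hl1
  have hB := intB hl0
  constructor
  · rw [hval, hA, hB]
    ring
  · rw [hval]
    have h1 : (0 : ℝ) < 1 - lam := by linarith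
    have h2 : (0 : ℝ) ≤ Δx ^ (1 - lam) := Real.rpow_nonneg hΔx.le _
    have h3 : (0 : ℝ) ≤ 2 / (1 - lam) + 2 / lam := by positivity
    have h4 : (0 : ℝ) ≤ clam * ((2 / (1 - lam) + 2 / lam) * Δx ^ (1 - lam)) := by positivity
    linarith
end

section
/- Assume the CFL condition, let U = (U_j)_{j∈ℤ} be a summable sequence and set V = S(U). Then for every κ ∈ ℝ and every i ∈ ℤ: |V_i − κ| − |U_i − κ| + (Δt/Δx)(Q_i − Q_{i−1}) − (Δt/Δx²)( |A(U_{i+1}) − A(κ)| − 2|A(U_i) − A(κ)| + |A(U_{i−1}) − A(κ)| ) ≤ (bΔt/Δx) sgn(V_i − κ) Σ_{j∈ℤ} G^i_j U_j, where Q_i = f̂(max(U_i,κ), max(U_{i+1},κ)) − f̂(min(U_i,κ), min(U_{i+1},κ)) and sgn(0) = 0. -/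
open MeasureTheory Filter Set

/-- `A(u) = ∫_0^u a(s) ds`. -/
noncomputable def Aint (a : ℝ → ℝ) (u : ℝ) : ℝ := ∫ s in (0:ℝ)..u, a s

/-- One step of the explicit scheme. -/
noncomputable def schemeStep (clam lam Δx Δt b : ℝ) (fhat : ℝ → ℝ → ℝ) (a : ℝ → ℝ)
    (U : ℤ → ℝ) (i : ℤ) : ℝ :=
  U i - (Δt / Δx) * (fhat (U i) (U (i + 1)) - fhat (U (i - 1)) (U i))
    + (Δt / Δx ^ 2) * (Aint a (U (i + 1)) - 2 * Aint a (U i) + Aint a (U (i - 1)))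
    + (b * Δt / Δx) * ∑' j : ℤ, Gw clam lam Δx i j * U j

/-- The scheme iterates: `U^0_i = (1/Δx)∫_{I_i} u₀` and `U^{n+1} = S(U^n)`. -/
noncomputable def Uiter (clam lam Δx Δt b : ℝ) (fhat : ℝ → ℝ → ℝ) (a : ℝ → ℝ)
    (u₀ : ℝ → ℝ) : ℕ → ℤ → ℝ
  | 0 => fun i => (1 / Δx) * ∫ x in Set.Ioo ((i : ℝ) * Δx) (((i : ℝ) + 1) * Δx), u₀ x
  | n + 1 => schemeStep clam lam Δx Δt b fhat a (Uiter clam lam Δx Δt b fhat a u₀ n)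

/-- `d_λ = c_λ ( ∫_{|z|<1} |z|^{−λ} dz + ∫_{|z|>1} |z|^{−1−λ} dz )`. -/
noncomputable def dlam (clam lam : ℝ) : ℝ :=
  clam * ((∫ z in {z : ℝ | |z| < 1}, |z| ^ (-lam)) + ∫ z in {z : ℝ | 1 < |z|}, |z| ^ (-1 - lam))

/-- The CFL condition: `f̂` is C¹ with bounded partial derivatives and
`(Δt/Δx)(‖∂₁f̂‖_∞ + ‖∂₂f̂‖_∞) + (2Δt/Δx²)‖a‖_∞ + b d_λ Δt/Δx^λ ≤ 1`. -/
def CFL (clam lam Δx Δt b : ℝ) (fhat : ℝ → ℝ → ℝ) (a : ℝ → ℝ) : Prop :=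
  ContDiff ℝ 1 (fun p : ℝ × ℝ => fhat p.1 p.2) ∧
  ∃ M1 M2 Ma : ℝ,
    (∀ u v : ℝ, |deriv (fun s => fhat s v) u| ≤ M1) ∧
    (∀ u v : ℝ, |deriv (fun s => fhat u s) v| ≤ M2) ∧
    (∀ s : ℝ, |a s| ≤ Ma) ∧
    (Δt / Δx) * (M1 + M2) + (2 * Δt / Δx ^ 2) * Ma + b * dlam clam lam * Δt / Δx ^ lam ≤ 1

/-- Standing assumptions on the data `f`, `a` and the numerical flux `f̂`. -/
structure SchemeData (f a : ℝ → ℝ) (fhat : ℝ → ℝ → ℝ) : Prop where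
  hfLip : ∃ K : NNReal, LipschitzWith K f
  hf0 : f 0 = 0
  haLip : ∃ K : NNReal, LipschitzWith K a
  haNonneg : ∀ s : ℝ, 0 ≤ a s
  haBdd : ∃ M : ℝ, ∀ s : ℝ, a s ≤ M
  hfhatLip : ∃ K : NNReal, LipschitzWith K (fun p : ℝ × ℝ => fhat p.1 p.2)
  hconsistent : ∀ u : ℝ, fhat u u = f u
  hmono1 : ∀ v : ℝ, Monotone (fun u => fhat u v)
  hmono2 : ∀ u : ℝ, Antitone (fun v => fhat u v)

private lemma sign_mul_self_eq_abs (x : ℝ) : Real.sign x * x = |x| := by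
  rcases lt_trichotomy x 0 with h | h | h
  · rw [Real.sign_of_neg h, abs_of_neg h]; ring
  · simp [h]
  · rw [Real.sign_of_pos h, abs_of_pos h]; ring

private lemma abs_sign_le_one (x : ℝ) : |Real.sign x| ≤ 1 := by
  rcases lt_trichotomy x 0 with h | h | h
  · rw [Real.sign_of_neg h]; norm_num
  · simp [h]
  · rw [Real.sign_of_pos h]; norm_num

/-- Cell entropy inequality for one step `V = S(U)` of the explicit scheme: for every
`κ ∈ ℝ` and `i ∈ ℤ`,
`|V_i − κ| − |U_i − κ| + (Δt/Δx)(Q_i − Q_{i−1})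
  − (Δt/Δx²)(|A(U_{i+1}) − A(κ)| − 2|A(U_i) − A(κ)| + |A(U_{i−1}) − A(κ)|)
  ≤ (bΔt/Δx) sgn(V_i − κ) Σ_j G^i_j U_j`,
where `Q_i = f̂(U_i ∨ κ, U_{i+1} ∨ κ) − f̂(U_i ∧ κ, U_{i+1} ∧ κ)`. -/
theorem cell_entropy_inequality (lam : ℝ) (hlam : lam ∈ Set.Ioo (0 : ℝ) 1)
    (clam : ℝ) (hclam : 0 < clam) (Δx Δt : ℝ) (hΔx : 0 < Δx) (hΔt : 0 < Δt)
    (b : ℝ) (hb : 0 ≤ b) (f a : ℝ → ℝ) (fhat : ℝ → ℝ → ℝ)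
    (hdata : SchemeData f a fhat)
    (hcfl : CFL clam lam Δx Δt b fhat a)
    (U : ℤ → ℝ) (hU : Summable U) :
    ∀ (κ : ℝ) (i : ℤ),
      |schemeStep clam lam Δx Δt b fhat a U i - κ| - |U i - κ|
        + (Δt / Δx) *
          ((fhat (max (U i) κ) (max (U (i + 1)) κ) - fhat (min (U i) κ) (min (U (i + 1)) κ)) -
           (fhat (max (U (i - 1)) κ) (max (U i) κ) - fhat (min (U (i - 1)) κ) (min (U i) κ)))
        - (Δt / Δx ^ 2) *
          (|Aint a (U (i + 1)) - Aint a κ| - 2 * |Aint a (U i) - Aint a κ| +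
            |Aint a (U (i - 1)) - Aint a κ|) ≤
      (b * Δt / Δx) * Real.sign (schemeStep clam lam Δx Δt b fhat a U i - κ) *
        ∑' j : ℤ, Gw clam lam Δx i j * U j  := by
  obtain ⟨hC1, M1, M2, Ma, hM1, hM2, hMa, hCFL⟩ := hcfl
  obtain ⟨Ka, haLipK⟩ := hdata.haLip
  have hacont : Continuous a := haLipK.continuous
  have haInt : ∀ u v : ℝ, IntervalIntegrable a MeasureTheory.volume u v :=
    fun u v => hacont.intervalIntegrable u v
  have hAdiff : ∀ u v : ℝ, Aint a v - Aint a u = ∫ s in u..v, a s := by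
    intro u v
    unfold Aint
    rw [← intervalIntegral.integral_interval_sub_left (haInt 0 v) (haInt 0 u)]
  have hAmono : Monotone (Aint a) := by
    intro u v huv
    have h := hAdiff u v
    have h2 : 0 ≤ ∫ s in u..v, a s :=
      intervalIntegral.integral_nonneg huv (fun s _ => hdata.haNonneg s)
    linarith
  have hM1nn : 0 ≤ M1 := le_trans (abs_nonneg _) (hM1 0 0)
  have hM2nn : 0 ≤ M2 := le_trans (abs_nonneg _) (hM2 0 0)
  have hMann : 0 ≤ Ma := le_trans (abs_nonneg _) (hMa 0)
  have hAlip : ∀ u v : ℝ, |Aint a v - Aint a u| ≤ Ma * |v - u| := by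
    intro u v
    rw [hAdiff]
    have h := intervalIntegral.norm_integral_le_of_norm_le_const
      (C := Ma) (f := a) (a := u) (b := v) (fun s _ => by simpa using hMa s)
    simpa [Real.norm_eq_abs, abs_sub_comm] using h
  have hdiff : Differentiable ℝ (fun p : ℝ × ℝ => fhat p.1 p.2) :=
    hC1.differentiable one_ne_zero
  have hf1lip : ∀ (w u v : ℝ), |fhat v w - fhat u w| ≤ M1 * |v - u| := by
    intro w u v
    have hd : Differentiable ℝ (fun s : ℝ => fhat s w) :=
      hdiff.comp (differentiable_id.prodMk (differentiable_const w))
    have hlip : LipschitzWith M1.toNNReal (fun s : ℝ => fhat s w) := by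
      apply lipschitzWith_of_nnnorm_deriv_le hd
      intro x
      rw [← NNReal.coe_le_coe, coe_nnnorm, Real.coe_toNNReal _ hM1nn, Real.norm_eq_abs]
      exact hM1 x w
    have h := hlip.dist_le_mul v u
    rw [Real.dist_eq, Real.dist_eq, Real.coe_toNNReal _ hM1nn] at h
    exact h
  have hf2lip : ∀ (u v w : ℝ), |fhat u w - fhat u v| ≤ M2 * |w - v| := by
    intro u v w
    have hd : Differentiable ℝ (fun s : ℝ => fhat u s) :=
      hdiff.comp ((differentiable_const u).prodMk differentiable_id)
    have hlip : LipschitzWith M2.toNNReal (fun s : ℝ => fhat u s) := by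
      apply lipschitzWith_of_nnnorm_deriv_le hd
      intro x
      rw [← NNReal.coe_le_coe, coe_nnnorm, Real.coe_toNNReal _ hM2nn, Real.norm_eq_abs]
      exact hM2 u x
    have h := hlip.dist_le_mul w v
    rw [Real.dist_eq, Real.dist_eq, Real.coe_toNNReal _ hM2nn] at h
    exact h
  have hl1nn : 0 ≤ Δt / Δx := div_nonneg hΔt.le hΔx.le
  have hl2nn : 0 ≤ Δt / Δx ^ 2 := div_nonneg hΔt.le (by positivity)
  -- dlam nonneg, pure CFL
  have hdlam : 0 ≤ dlam clam lam := by
    unfold dlam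
    have hI1 : 0 ≤ ∫ z in {z : ℝ | |z| < 1}, |z| ^ (-lam) :=
      MeasureTheory.integral_nonneg fun z => Real.rpow_nonneg (abs_nonneg z) _
    have hI2 : 0 ≤ ∫ z in {z : ℝ | 1 < |z|}, |z| ^ (-1 - lam) :=
      MeasureTheory.integral_nonneg fun z => Real.rpow_nonneg (abs_nonneg z) _
    exact mul_nonneg hclam.le (add_nonneg hI1 hI2)
  have hcfl' : (Δt / Δx) * (M1 + M2) + 2 * (Δt / Δx ^ 2) * Ma ≤ 1 := by
    have hx : (0:ℝ) < Δx ^ lam := Real.rpow_pos_of_pos hΔx lam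
    have hterm : 0 ≤ b * dlam clam lam * Δt / Δx ^ lam :=
      div_nonneg (mul_nonneg (mul_nonneg hb hdlam) hΔt.le) hx.le
    have h2 : 2 * Δt / Δx ^ 2 * Ma = 2 * (Δt / Δx ^ 2) * Ma := by ring
    linarith [hCFL, h2.ge]
  -- the local scheme function
  set H : ℝ → ℝ → ℝ → ℝ := fun u v w =>
    v - (Δt / Δx) * (fhat v w - fhat u v)
      + (Δt / Δx ^ 2) * (Aint a w - 2 * Aint a v + Aint a u) with hH
  have Hmono1 : ∀ v w u1 u2, u1 ≤ u2 → H u1 v w ≤ H u2 v w := by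
    intro v w u1 u2 h
    have hf : fhat u1 v ≤ fhat u2 v := hdata.hmono1 v h
    have hA : Aint a u1 ≤ Aint a u2 := hAmono h
    have e1 : (Δt / Δx) * fhat u1 v ≤ (Δt / Δx) * fhat u2 v :=
      mul_le_mul_of_nonneg_left hf hl1nn
    have e2 : (Δt / Δx ^ 2) * Aint a u1 ≤ (Δt / Δx ^ 2) * Aint a u2 :=
      mul_le_mul_of_nonneg_left hA hl2nn
    simp only [hH]
    nlinarith [e1, e2]
  have Hmono3 : ∀ u v w1 w2, w1 ≤ w2 → H u v w1 ≤ H u v w2 := by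
    intro u v w1 w2 h
    have hf : fhat v w2 ≤ fhat v w1 := hdata.hmono2 v h
    have hA : Aint a w1 ≤ Aint a w2 := hAmono h
    have e1 : (Δt / Δx) * fhat v w2 ≤ (Δt / Δx) * fhat v w1 :=
      mul_le_mul_of_nonneg_left hf hl1nn
    have e2 : (Δt / Δx ^ 2) * Aint a w1 ≤ (Δt / Δx ^ 2) * Aint a w2 :=
      mul_le_mul_of_nonneg_left hA hl2nn
    simp only [hH]
    nlinarith [e1, e2]
  have Hmono2 : ∀ u w v1 v2, v1 ≤ v2 → H u v1 w ≤ H u v2 w := by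
    intro u w v1 v2 h
    have h1 : fhat v2 w - fhat v1 w ≤ M1 * (v2 - v1) := by
      have := (le_abs_self (fhat v2 w - fhat v1 w)).trans (hf1lip w v1 v2)
      rwa [abs_of_nonneg (by linarith)] at this
    have h2 : fhat u v1 - fhat u v2 ≤ M2 * (v2 - v1) := by
      have h0 := (le_abs_self (fhat u v1 - fhat u v2)).trans (hf2lip u v2 v1)
      rwa [abs_sub_comm, abs_of_nonneg (by linarith : (0:ℝ) ≤ v2 - v1)] at h0
    have h3 : Aint a v2 - Aint a v1 ≤ Ma * (v2 - v1) := by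
      have := (le_abs_self (Aint a v2 - Aint a v1)).trans (hAlip v1 v2)
      rwa [abs_of_nonneg (by linarith)] at this
    have e1 : (Δt / Δx) * (fhat v2 w - fhat v1 w) ≤ (Δt / Δx) * (M1 * (v2 - v1)) :=
      mul_le_mul_of_nonneg_left h1 hl1nn
    have e2 : (Δt / Δx) * (fhat u v1 - fhat u v2) ≤ (Δt / Δx) * (M2 * (v2 - v1)) :=
      mul_le_mul_of_nonneg_left h2 hl1nn
    have e3 : (Δt / Δx ^ 2) * (Aint a v2 - Aint a v1) ≤ (Δt / Δx ^ 2) * (Ma * (v2 - v1)) :=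
      mul_le_mul_of_nonneg_left h3 hl2nn
    have e4 : ((Δt / Δx) * (M1 + M2) + 2 * (Δt / Δx ^ 2) * Ma) * (v2 - v1) ≤ 1 * (v2 - v1) :=
      mul_le_mul_of_nonneg_right hcfl' (by linarith)
    simp only [hH]
    nlinarith [e1, e2, e3, e4]
  have Hkappa : ∀ κ : ℝ, H κ κ κ = κ := by
    intro κ; simp only [hH]; ring
  intro κ i
  set T := (b * Δt / Δx) * ∑' j : ℤ, Gw clam lam Δx i j * U j with hT
  have hV : schemeStep clam lam Δx Δt b fhat a U i = H (U (i-1)) (U i) (U (i+1)) + T := by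
    unfold schemeStep
    simp only [hH, hT]
    try ring
  set V := schemeStep clam lam Δx Δt b fhat a U i with hVdef
  set P := H (max (U (i-1)) κ) (max (U i) κ) (max (U (i+1)) κ) with hP
  set N := H (min (U (i-1)) κ) (min (U i) κ) (min (U (i+1)) κ) with hN
  have hHP : H (U (i-1)) (U i) (U (i+1)) ≤ P :=
    le_trans (Hmono1 _ _ _ _ (le_max_left _ κ))
      (le_trans (Hmono2 _ _ _ _ (le_max_left _ κ)) (Hmono3 _ _ _ _ (le_max_left _ κ)))
  have hκP : κ ≤ P := by
    rw [← Hkappa κ]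
    exact le_trans (Hmono1 _ _ _ _ (le_max_right _ κ))
      (le_trans (Hmono2 _ _ _ _ (le_max_right _ κ)) (Hmono3 _ _ _ _ (le_max_right _ κ)))
  have hNH : N ≤ H (U (i-1)) (U i) (U (i+1)) :=
    le_trans (Hmono1 _ _ _ _ (min_le_left _ κ))
      (le_trans (Hmono2 _ _ _ _ (min_le_left _ κ)) (Hmono3 _ _ _ _ (min_le_left _ κ)))
  have hNκ : N ≤ κ := by
    rw [← Hkappa κ]
    exact le_trans (Hmono1 _ _ _ _ (min_le_right _ κ))
      (le_trans (Hmono2 _ _ _ _ (min_le_right _ κ)) (Hmono3 _ _ _ _ (min_le_right _ κ)))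
  have habs : |H (U (i-1)) (U i) (U (i+1)) - κ| ≤ P - N :=
    abs_sub_le_iff.2 ⟨by linarith, by linarith⟩
  have eA : ∀ x : ℝ, Aint a (max x κ) - Aint a (min x κ) = |Aint a x - Aint a κ| := by
    intro x
    rw [hAmono.map_max, hAmono.map_min, max_sub_min_eq_abs']
  have hPN : P - N
      = |U i - κ|
        - (Δt / Δx) *
          ((fhat (max (U i) κ) (max (U (i + 1)) κ) - fhat (min (U i) κ) (min (U (i + 1)) κ)) -
           (fhat (max (U (i - 1)) κ) (max (U i) κ) - fhat (min (U (i - 1)) κ) (min (U i) κ)))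
        + (Δt / Δx ^ 2) *
          (|Aint a (U (i + 1)) - Aint a κ| - 2 * |Aint a (U i) - Aint a κ| +
            |Aint a (U (i - 1)) - Aint a κ|) := by
    simp only [hP, hN, hH]
    rw [← max_sub_min_eq_abs' (U i) κ, ← eA (U (i-1)), ← eA (U i), ← eA (U (i+1))]
    ring
  have hsgn : Real.sign (V - κ) * (V - κ) = |V - κ| := sign_mul_self_eq_abs _
  have hsle : Real.sign (V - κ) * (H (U (i-1)) (U i) (U (i+1)) - κ)
      ≤ |H (U (i-1)) (U i) (U (i+1)) - κ| := by
    calc Real.sign (V - κ) * (H (U (i-1)) (U i) (U (i+1)) - κ)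
        ≤ |Real.sign (V - κ) * (H (U (i-1)) (U i) (U (i+1)) - κ)| := le_abs_self _
      _ = |Real.sign (V - κ)| * |H (U (i-1)) (U i) (U (i+1)) - κ| := abs_mul _ _
      _ ≤ 1 * |H (U (i-1)) (U i) (U (i+1)) - κ| :=
          mul_le_mul_of_nonneg_right (abs_sign_le_one _) (abs_nonneg _)
      _ = _ := one_mul _
  have key : |V - κ| ≤ P - N + Real.sign (V - κ) * T := by
    have h1 : |V - κ| = Real.sign (V - κ) * (H (U (i-1)) (U i) (U (i+1)) - κ)
        + Real.sign (V - κ) * T := by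
      rw [← hsgn, hV]; ring
    linarith [hsle, habs]
  have hTs : Real.sign (V - κ) * T
      = b * Δt / Δx * Real.sign (V - κ) * ∑' j : ℤ, Gw clam lam Δx i j * U j := by
    rw [hT]; ring
  rw [hPN] at key
  linarith [key, hTs.ge, hTs.le]
end

section
/- Let f: ℝ → ℝ be continuous and let f̂: ℝ² → ℝ be consistent with f and monotone. Then for all u⁻, u⁺ ∈ ℝ the oriented integral satisfies ∫_{u⁻}^{u⁺} ( f(s) − f̂(u⁻, u⁺) ) ds ≥ 0. -/
open intervalIntegral

/-- For a continuous `f` and a numerical flux `f̂` that is consistent with `f`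
(`f̂(u,u) = f(u)`) and monotone (nondecreasing in the first argument, nonincreasing in
the second), the oriented integral `∫_{u⁻}^{u⁺} (f(s) − f̂(u⁻,u⁺)) ds` is nonnegative. -/
theorem eflux_inequality (f : ℝ → ℝ) (hf : Continuous f) (fhat : ℝ → ℝ → ℝ)
    (hconsistent : ∀ u : ℝ, fhat u u = f u)
    (hmono1 : ∀ v : ℝ, Monotone (fun u => fhat u v))
    (hmono2 : ∀ u : ℝ, Antitone (fun v => fhat u v)) :
    ∀ um up : ℝ, 0 ≤ ∫ s in um..up, (f s - fhat um up) := by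
  intro um up
  rcases le_total um up with h | h
  · apply intervalIntegral.integral_nonneg h
    intro s hs
    have h1 : fhat um up ≤ fhat s up := hmono1 up hs.1
    have h2 : fhat s up ≤ fhat s s := hmono2 s hs.2
    rw [hconsistent s] at h2
    linarith
  · have heq : (∫ s in um..up, (f s - fhat um up)) = ∫ s in up..um, (fhat um up - f s) := by
      rw [intervalIntegral.integral_symm, ← intervalIntegral.integral_neg]
      simp [neg_sub]
    rw [heq]
    apply intervalIntegral.integral_nonneg h
    intro s hs
    have h1 : fhat s s ≤ fhat um s := hmono1 s hs.2
    have h2 : fhat um s ≤ fhat um up := hmono2 um hs.1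
    rw [hconsistent s] at h1
    linarith
end
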